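/- arXiv:1812.03345 — 4 statements merged into one kernel-verified Lean document; each statement's English description precedes it below -/
import Mathlib

section
/- Let n ≥ 1 and let λ = (λ_1 ≥ … ≥ λ_n ≥ 0) be a partition with integer parts. Then every extreme point of the Gelfand–Tsetlin polytope GT(λ) has all coordinates in ℤ; that is, GT(λ) is a lattice polytope. -/
/-- The Gelfand–Tsetlin polytope `GT(lam)` realized as a set of functions
`x : ℕ → ℕ → ℝ`: the meaningful coordinates are `x i j` for `1 ≤ j ≤ i ≤ n`
(row `i` has entries `x i 1, …, x i i`), all other values vanish, the interlacing
inequalities `x (i+1) j ≥ x i j` and `x i j ≥ x (i+1) (j+1)` hold, and the top row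
is `x n j = lam j`. -/
def GTSet (n : ℕ) (lam : Fin n → ℝ) : Set (ℕ → ℕ → ℝ) :=
  {x | (∀ i j, x i j ≠ 0 → 1 ≤ j ∧ j ≤ i ∧ i ≤ n) ∧
    (∀ i j, 1 ≤ j → j ≤ i → i + 1 ≤ n → x i j ≤ x (i + 1) j ∧ x (i + 1) (j + 1) ≤ x i j) ∧
    (∀ j : Fin n, x n (j.1 + 1) = lam j)}

private lemma gt_key1 {ε a b ca cb : ℝ} (hab : a ≤ b) (hca : ca = 0 ∨ ca = 1)
    (hcb : cb = 0 ∨ cb = 1) (hstrict : ca = 1 → cb = 0 → ε ≤ b - a) (hε : 0 ≤ ε) :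
    a + ε * ca ≤ b + ε * cb := by
  rcases hca with h1 | h1 <;> rcases hcb with h2 | h2 <;> subst h1 <;> subst h2 <;>
    [skip; skip; (have := hstrict rfl rfl); skip] <;> nlinarith

private lemma gt_key2 {ε a b ca cb : ℝ} (hab : a ≤ b) (hca : ca = 0 ∨ ca = 1)
    (hcb : cb = 0 ∨ cb = 1) (hstrict : cb = 1 → ca = 0 → ε ≤ b - a) (hε : 0 ≤ ε) :
    a - ε * ca ≤ b - ε * cb := by
  rcases hca with h1 | h1 <;> rcases hcb with h2 | h2 <;> subst h1 <;> subst h2 <;>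
    [skip; (have := hstrict rfl rfl); skip; skip] <;> nlinarith

/-- Every extreme point of the Gelfand–Tsetlin polytope of an integer partition
has integer coordinates, i.e. `GT(λ)` is a lattice polytope. -/
theorem gtSet_extremePoints_integral (n : ℕ) (hn : 1 ≤ n) (lam : Fin n → ℕ)
    (hlam : Antitone lam) :
    ∀ x ∈ Set.extremePoints ℝ (GTSet n (fun j => (lam j : ℝ))),
      ∀ i j : ℕ, ∃ m : ℤ, x i j = (m : ℝ) := by
  classical
  intro x hx i0 j0
  by_contra hni
  push_neg at hni
  obtain ⟨hxmem, hext⟩ := hx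
  obtain ⟨hsupp, hineq, htop⟩ := hxmem
  set v := x i0 j0 with hv
  have hv0 : v ≠ 0 := fun h => hni 0 (by simpa using h)
  have htri : 1 ≤ j0 ∧ j0 ≤ i0 ∧ i0 ≤ n := hsupp i0 j0 hv0
  -- top-row entries are integral, hence different from v
  have htopv : ∀ j, 1 ≤ j → j ≤ n → x n j ≠ v := by
    intro j h1 h2 hEq
    have h3 : x n ((j - 1) + 1) = ((lam ⟨j - 1, by omega⟩ : ℕ) : ℝ) :=
      htop ⟨j - 1, by omega⟩
    rw [Nat.sub_add_cancel h1] at h3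
    exact hni ((lam ⟨j - 1, by omega⟩ : ℕ) : ℤ) (by rw [← hEq, h3]; push_cast; ring)
  -- the finite set of positive gaps, together with 1
  set T : Finset (ℕ × ℕ) := Finset.range (n + 1) ×ˢ Finset.range (n + 2) with hT
  set G : Finset ℝ :=
    (T.image (fun p => x (p.1 + 1) p.2 - x p.1 p.2) ∪
      T.image (fun p => x p.1 p.2 - x (p.1 + 1) (p.2 + 1))).filter (fun t => 0 < t) with hG
  set D : Finset ℝ := insert 1 G with hD
  have hDne : D.Nonempty := ⟨1, Finset.mem_insert_self _ _⟩
  set ε := D.min' hDne with hεdef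
  have hεpos : 0 < ε := by
    have hmem : ε ∈ D := Finset.min'_mem _ _
    rcases Finset.mem_insert.1 hmem with h | h
    · rw [h]; norm_num
    · exact (Finset.mem_filter.1 h).2
  have hεg1 : ∀ i j, i ≤ n → j ≤ n + 1 → x i j < x (i + 1) j → ε ≤ x (i + 1) j - x i j := by
    intro i j hi hj hlt
    apply Finset.min'_le
    rw [hD]
    apply Finset.mem_insert_of_mem
    rw [hG]
    refine Finset.mem_filter.2 ⟨Finset.mem_union_left _ ?_, by linarith⟩
    exact Finset.mem_image.2 ⟨(i, j), by simp [hT]; omega, rfl⟩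
  have hεg2 : ∀ i j, i ≤ n → j ≤ n + 1 → x (i + 1) (j + 1) < x i j →
      ε ≤ x i j - x (i + 1) (j + 1) := by
    intro i j hi hj hlt
    apply Finset.min'_le
    rw [hD]
    apply Finset.mem_insert_of_mem
    rw [hG]
    refine Finset.mem_filter.2 ⟨Finset.mem_union_right _ ?_, by linarith⟩
    exact Finset.mem_image.2 ⟨(i, j), by simp [hT]; omega, rfl⟩
  -- the perturbation direction
  set c : ℕ → ℕ → ℝ :=
    fun i j => if 1 ≤ j ∧ j ≤ i ∧ i ≤ n ∧ x i j = v then (1 : ℝ) else 0 with hc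
  have hc01 : ∀ i j, c i j = 0 ∨ c i j = 1 := by
    intro i j; by_cases h : 1 ≤ j ∧ j ≤ i ∧ i ≤ n ∧ x i j = v <;> simp [hc, h]
  have hc1 : ∀ i j, c i j = 1 ↔ (1 ≤ j ∧ j ≤ i ∧ i ≤ n ∧ x i j = v) := by
    intro i j; by_cases h : 1 ≤ j ∧ j ≤ i ∧ i ≤ n ∧ x i j = v <;> simp [hc, h]
  have hc0 : ∀ i j, c i j = 0 ↔ ¬(1 ≤ j ∧ j ≤ i ∧ i ≤ n ∧ x i j = v) := by
    intro i j; by_cases h : 1 ≤ j ∧ j ≤ i ∧ i ≤ n ∧ x i j = v <;> simp [hc, h]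
  set y1 : ℕ → ℕ → ℝ := fun i j => x i j + ε * c i j with hy1
  set y2 : ℕ → ℕ → ℝ := fun i j => x i j - ε * c i j with hy2
  have hcy : ∀ i j, 1 ≤ j → j ≤ i → i + 1 ≤ n →
      (c i j = 1 → c (i + 1) j = 0 → ε ≤ x (i + 1) j - x i j) ∧
      (c i j = 1 → c (i + 1) (j + 1) = 0 → ε ≤ x i j - x (i + 1) (j + 1)) ∧
      (c (i + 1) j = 1 → c i j = 0 → ε ≤ x (i + 1) j - x i j) ∧
      (c (i + 1) (j + 1) = 1 → c i j = 0 → ε ≤ x i j - x (i + 1) (j + 1)) := by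
    intro i j h1 h2 h3
    obtain ⟨hle1, hle2⟩ := hineq i j h1 h2 h3
    refine ⟨?_, ?_, ?_, ?_⟩
    · intro ha hb
      have hva := (hc1 i j).1 ha
      have hvb := (hc0 (i + 1) j).1 hb
      have : x (i + 1) j ≠ v := fun h => hvb ⟨h1, by omega, by omega, h⟩
      exact hεg1 i j (by omega) (by omega) (lt_of_le_of_ne hle1 (by rw [hva.2.2.2]; exact fun h => this h.symm))
    · intro ha hb
      have hva := (hc1 i j).1 ha
      have hvb := (hc0 (i + 1) (j + 1)).1 hb
      have : x (i + 1) (j + 1) ≠ v := fun h => hvb ⟨by omega, by omega, by omega, h⟩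
      exact hεg2 i j (by omega) (by omega) (lt_of_le_of_ne hle2 (by rw [hva.2.2.2]; exact this))
    · intro ha hb
      have hva := (hc1 (i + 1) j).1 ha
      have hvb := (hc0 i j).1 hb
      have : x i j ≠ v := fun h => hvb ⟨h1, h2, by omega, h⟩
      exact hεg1 i j (by omega) (by omega) (lt_of_le_of_ne hle1 (by rw [hva.2.2.2]; exact this))
    · intro ha hb
      have hva := (hc1 (i + 1) (j + 1)).1 ha
      have hvb := (hc0 i j).1 hb
      have : x i j ≠ v := fun h => hvb ⟨h1, h2, by omega, h⟩
      exact hεg2 i j (by omega) (by omega) (lt_of_le_of_ne hle2 (by rw [hva.2.2.2]; exact fun h => this h.symm))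
  -- top row is not perturbed
  have hctop : ∀ j : Fin n, c n (j.1 + 1) = 0 := by
    intro j
    rw [hc0]
    rintro ⟨-, h2, -, h4⟩
    exact htopv (j.1 + 1) (by omega) (by omega) h4
  -- y1 ∈ GTSet
  have hy1mem : y1 ∈ GTSet n (fun j => (lam j : ℝ)) := by
    refine ⟨?_, ?_, ?_⟩
    · intro i j hne
      by_cases hcc : 1 ≤ j ∧ j ≤ i ∧ i ≤ n ∧ x i j = v
      · exact ⟨hcc.1, hcc.2.1, hcc.2.2.1⟩
      · apply hsupp i j
        have : c i j = 0 := (hc0 i j).2 hcc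
        simpa [hy1, this] using hne
    · intro i j h1 h2 h3
      obtain ⟨hle1, hle2⟩ := hineq i j h1 h2 h3
      obtain ⟨k1, k2, k3, k4⟩ := hcy i j h1 h2 h3
      constructor
      · exact gt_key1 hle1 (hc01 i j) (hc01 (i + 1) j) k1 hεpos.le
      · exact gt_key1 hle2 (hc01 (i + 1) (j + 1)) (hc01 i j) k4 hεpos.le
    · intro j
      have := hctop j
      simp only [hy1, this, mul_zero, add_zero]
      exact htop j
  -- y2 ∈ GTSet
  have hy2mem : y2 ∈ GTSet n (fun j => (lam j : ℝ)) := by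
    refine ⟨?_, ?_, ?_⟩
    · intro i j hne
      by_cases hcc : 1 ≤ j ∧ j ≤ i ∧ i ≤ n ∧ x i j = v
      · exact ⟨hcc.1, hcc.2.1, hcc.2.2.1⟩
      · apply hsupp i j
        have : c i j = 0 := (hc0 i j).2 hcc
        simpa [hy2, this] using hne
    · intro i j h1 h2 h3
      obtain ⟨hle1, hle2⟩ := hineq i j h1 h2 h3
      obtain ⟨k1, k2, k3, k4⟩ := hcy i j h1 h2 h3
      constructor
      · exact gt_key2 hle1 (hc01 i j) (hc01 (i + 1) j) k3 hεpos.le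
      · exact gt_key2 hle2 (hc01 (i + 1) (j + 1)) (hc01 i j) k2 hεpos.le
    · intro j
      have := hctop j
      simp only [hy2, this, mul_zero, sub_zero]
      exact htop j
  -- x is the midpoint of y1 and y2
  have hmid : x ∈ openSegment ℝ y1 y2 := by
    refine ⟨1 / 2, 1 / 2, by norm_num, by norm_num, by norm_num, ?_⟩
    funext i j
    simp only [hy1, hy2, Pi.add_apply, Pi.smul_apply, smul_eq_mul]
    ring
  have := hext hy1mem hy2mem hmid
  have hcontra : y1 i0 j0 = x i0 j0 := by rw [this]
  have hci0 : c i0 j0 = 1 := (hc1 i0 j0).2 ⟨htri.1, htri.2.1, htri.2.2, rfl⟩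
  rw [hy1] at hcontra
  simp only [hci0, mul_one] at hcontra
  linarith
end

section
/- Let n ≥ 2 and let σ be a permutation in the symmetric group S_n. If (i_1, …, i_ℓ) and (j_1, …, j_ℓ) are two reduced words for σ, then the corresponding composites of Demazure operators on ℚ[z_1, …, z_n] coincide: π_{i_1} ∘ π_{i_2} ∘ ⋯ ∘ π_{i_ℓ} = π_{j_1} ∘ π_{j_2} ∘ ⋯ ∘ π_{j_ℓ}. Hence the operator π_σ is well defined independently of the chosen reduced word. -/
open MvPolynomial
open scoped Classical

/-- The Demazure operator `π_i(f) = ∂_i(z_i · f)` on `ℚ[z_1, …, z_n]`, where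
`∂_i(h) = (h − s_i(h))/(z_i − z_{i+1})` and `s_i` swaps the variables `z_i` and
`z_{i+1}` (indices are `0`-based, so `i` ranges over `0, …, n − 2`).  Since
`z_i − z_{i+1}` always divides `z_i·f − s_i(z_i·f)` and quotients are unique in the
integral domain `ℚ[z_1, …, z_n]`, the value below is the unique polynomial `g` with
`(z_i − z_{i+1})·g = z_i·f − s_i(z_i·f)`. -/
noncomputable def piOp (n : ℕ) (i : ℕ) (f : MvPolynomial (Fin n) ℚ) :
    MvPolynomial (Fin n) ℚ :=
  if h : i + 1 < n then
    @dite _ (∃ g : MvPolynomial (Fin n) ℚ,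
        (X (⟨i, Nat.lt_of_succ_lt h⟩ : Fin n) - X ⟨i + 1, h⟩) * g =
          X (⟨i, Nat.lt_of_succ_lt h⟩ : Fin n) * f -
            rename (Equiv.swap (⟨i, Nat.lt_of_succ_lt h⟩ : Fin n) ⟨i + 1, h⟩)
              (X (⟨i, Nat.lt_of_succ_lt h⟩ : Fin n) * f)) (Classical.propDecidable _)
      (fun hg => hg.choose) (fun _ => 0)
  else 0


/-- The simple transposition `s_i ∈ S_n` swapping `i` and `i + 1`
(`0`-based, so `i` ranges over `0, …, n − 2`). -/
def sT (n : ℕ) (i : ℕ) : Equiv.Perm (Fin n) :=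
  if h : i + 1 < n then Equiv.swap ⟨i, Nat.lt_of_succ_lt h⟩ ⟨i + 1, h⟩ else 1

/-- The number of inversions (Coxeter length) of a permutation of `Fin n`. -/
def invCount {n : ℕ} (σ : Equiv.Perm (Fin n)) : ℕ :=
  (Finset.univ.filter (fun p : Fin n × Fin n => p.1 < p.2 ∧ σ p.2 < σ p.1)).card

/-- `w = (i_1, …, i_ℓ)` is a reduced word for `σ ∈ S_n`: all letters are valid
(`0`-based: `i + 1 < n`), `σ = s_{i_1} s_{i_2} ⋯ s_{i_ℓ}`, and `ℓ` equals the number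
of inversions of `σ`. -/
def IsReducedWordFor (n : ℕ) (σ : Equiv.Perm (Fin n)) (w : List ℕ) : Prop :=
  (∀ i ∈ w, i + 1 < n) ∧ (w.map (sT n)).prod = σ ∧ w.length = invCount σ

/-- The composite `π_{i_1} ∘ π_{i_2} ∘ ⋯ ∘ π_{i_ℓ}` applied to `f`. -/
noncomputable def piWord (n : ℕ) (w : List ℕ) (f : MvPolynomial (Fin n) ℚ) :
    MvPolynomial (Fin n) ℚ :=
  w.foldr (piOp n) f


lemma X_sub_ne {n : ℕ} {a b : Fin n} (h : a ≠ b) :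
    (X a : MvPolynomial (Fin n) ℚ) - X b ≠ 0 := by
  intro hc
  exact h (MvPolynomial.X_injective (sub_eq_zero.mp hc))

lemma dvd_sub_rename_swap {n : ℕ} (a b : Fin n) (f : MvPolynomial (Fin n) ℚ) :
    (X a - X b) ∣ f - rename (Equiv.swap a b) f := by
  induction f using MvPolynomial.induction_on with
  | C c => simp
  | add p q hp hq =>
      have : (p + q) - rename (Equiv.swap a b) (p + q)
          = (p - rename (Equiv.swap a b) p) + (q - rename (Equiv.swap a b) q) := by
        rw [map_add]; ring
      rw [this]; exact dvd_add hp hq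
  | mul_X p i hp =>
      have hr : rename (Equiv.swap a b) (p * X i)
          = rename (Equiv.swap a b) p * X (Equiv.swap a b i) := by
        rw [map_mul, rename_X]
      have key : p * X i - rename (Equiv.swap a b) (p * X i)
          = (p - rename (Equiv.swap a b) p) * X i
            + rename (Equiv.swap a b) p * (X i - X (Equiv.swap a b i)) := by
        rw [hr]; ring
      rw [key]
      apply dvd_add
      · exact Dvd.dvd.mul_right hp _
      · apply Dvd.dvd.mul_left
        rcases eq_or_ne i a with rfl | hia
        · rw [Equiv.swap_apply_left]
        · rcases eq_or_ne i b with rfl | hib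
          · rw [Equiv.swap_apply_right]
            have : (X i : MvPolynomial (Fin n) ℚ) - X a = -(X a - X i) := by ring
            rw [this]
            exact (dvd_refl _).neg_right
          · rw [Equiv.swap_apply_of_ne_of_ne hia hib, sub_self]
            exact dvd_zero _

lemma piOp_spec {n i : ℕ} (h : i + 1 < n) (f : MvPolynomial (Fin n) ℚ) :
    (X (⟨i, Nat.lt_of_succ_lt h⟩ : Fin n) - X ⟨i + 1, h⟩) * piOp n i f =
      X (⟨i, Nat.lt_of_succ_lt h⟩ : Fin n) * f -
        rename (Equiv.swap (⟨i, Nat.lt_of_succ_lt h⟩ : Fin n) ⟨i + 1, h⟩)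
          (X (⟨i, Nat.lt_of_succ_lt h⟩ : Fin n) * f) := by
  have hg : ∃ g : MvPolynomial (Fin n) ℚ,
      (X (⟨i, Nat.lt_of_succ_lt h⟩ : Fin n) - X ⟨i + 1, h⟩) * g =
        X (⟨i, Nat.lt_of_succ_lt h⟩ : Fin n) * f -
          rename (Equiv.swap (⟨i, Nat.lt_of_succ_lt h⟩ : Fin n) ⟨i + 1, h⟩)
            (X (⟨i, Nat.lt_of_succ_lt h⟩ : Fin n) * f) := by
    obtain ⟨c, hc⟩ := dvd_sub_rename_swap (⟨i, Nat.lt_of_succ_lt h⟩ : Fin n) ⟨i + 1, h⟩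
      (X (⟨i, Nat.lt_of_succ_lt h⟩ : Fin n) * f)
    exact ⟨c, hc.symm⟩
  rw [piOp, dif_pos h, dif_pos hg]
  exact hg.choose_spec


lemma piOp_spec' {n i : ℕ} (h : i + 1 < n) (a b : Fin n) (ha : a.val = i)
    (hb : b.val = i + 1) (f : MvPolynomial (Fin n) ℚ) :
    (X a - X b) * piOp n i f =
      X a * f - rename (Equiv.swap a b) (X a * f) := by
  obtain rfl : a = ⟨i, Nat.lt_of_succ_lt h⟩ := Fin.ext ha
  obtain rfl : b = ⟨i + 1, h⟩ := Fin.ext hb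
  exact piOp_spec h f

lemma piOp_braid {n i : ℕ} (h : i + 2 < n) (f : MvPolynomial (Fin n) ℚ) :
    piOp n i (piOp n (i + 1) (piOp n i f)) =
      piOp n (i + 1) (piOp n i (piOp n (i + 1) f)) := by
  have hi : i + 1 < n := by omega
  have hj : (i + 1) + 1 < n := by omega
  obtain ⟨p, hp⟩ : ∃ p : Fin n, p.val = i := ⟨⟨i, by omega⟩, rfl⟩
  obtain ⟨q, hq⟩ : ∃ q : Fin n, q.val = i + 1 := ⟨⟨i + 1, by omega⟩, rfl⟩
  obtain ⟨r, hr⟩ : ∃ r : Fin n, r.val = i + 2 := ⟨⟨i + 2, by omega⟩, rfl⟩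
  have hpq : p ≠ q := by rw [Fin.ne_iff_vne]; omega
  have hqr : q ≠ r := by rw [Fin.ne_iff_vne]; omega
  have hpr : p ≠ r := by rw [Fin.ne_iff_vne]; omega
  set s := Equiv.swap p q with hs
  set t := Equiv.swap q r with ht
  have hsp : s p = q := Equiv.swap_apply_left p q
  have hsq : s q = p := Equiv.swap_apply_right p q
  have hsr : s r = r := Equiv.swap_apply_of_ne_of_ne hpr.symm hqr.symm
  have htp : t p = p := Equiv.swap_apply_of_ne_of_ne hpq hpr
  have htq : t q = r := Equiv.swap_apply_left q r
  have htr : t r = q := Equiv.swap_apply_right q r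
  -- composition facts
  have hss : (⇑s ∘ ⇑s : Fin n → Fin n) = id := by
    funext x; exact Equiv.swap_apply_self p q x
  have htt : (⇑t ∘ ⇑t : Fin n → Fin n) = id := by
    funext x; exact Equiv.swap_apply_self q r x
  have hperm : t * s * t = s * t * s := by
    rw [hs, ht]
    rw [Equiv.swap_mul_swap_mul_swap hpq hpr]
    rw [Equiv.swap_comm p q, Equiv.swap_comm q r,
      Equiv.swap_mul_swap_mul_swap hqr.symm hpr.symm]
    rw [Equiv.swap_comm]
  have hbraid : (⇑t ∘ ⇑s ∘ ⇑t : Fin n → Fin n) = ⇑s ∘ ⇑t ∘ ⇑s := by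
    funext x
    have h1 : (t * s * t) x = (s * t * s) x := by rw [hperm]
    simpa [Equiv.Perm.mul_apply] using h1
  -- atoms
  set B1 := piOp n i f with hB1
  set A1 := piOp n (i + 1) B1 with hA1
  set L := piOp n i A1 with hL
  set B2 := piOp n (i + 1) f with hB2
  set A2 := piOp n i B2 with hA2
  set R := piOp n (i + 1) A2 with hR
  -- base equations
  have eB1 : (X p - X q) * B1 = X p * f - X q * rename (⇑s) f := by
    have e := piOp_spec' hi p q hp (by omega) f
    rwa [map_mul, rename_X, hsp] at e
  have eA1 : (X q - X r) * A1 = X q * B1 - X r * rename (⇑t) B1 := by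
    have e := piOp_spec' hj q r hq (by omega) B1
    rwa [map_mul, rename_X, htq] at e
  have eL : (X p - X q) * L = X p * A1 - X q * rename (⇑s) A1 := by
    have e := piOp_spec' hi p q hp (by omega) A1
    rwa [map_mul, rename_X, hsp] at e
  have eB2 : (X q - X r) * B2 = X q * f - X r * rename (⇑t) f := by
    have e := piOp_spec' hj q r hq (by omega) f
    rwa [map_mul, rename_X, htq] at e
  have eA2 : (X p - X q) * A2 = X p * B2 - X q * rename (⇑s) B2 := by
    have e := piOp_spec' hi p q hp (by omega) B2
    rwa [map_mul, rename_X, hsp] at e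
  have eR : (X q - X r) * R = X q * A2 - X r * rename (⇑t) A2 := by
    have e := piOp_spec' hj q r hq (by omega) A2
    rwa [map_mul, rename_X, htq] at e
  -- renamed equations
  have esB1 : (X q - X p) * rename (⇑s) B1 = X q * rename (⇑s) f - X p * f := by
    have e := congrArg (rename (⇑s)) eB1
    simp only [map_sub, map_mul, rename_X, rename_rename, hsp, hsq] at e
    rwa [hss, rename_id] at e
  have hB1s : rename (⇑s) B1 = B1 := by
    apply mul_left_cancel₀ (X_sub_ne hpq)
    linear_combination -esB1 - eB1
  have etB1 : (X p - X r) * rename (⇑t) B1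
      = X p * rename (⇑t) f - X r * rename (⇑t ∘ ⇑s) f := by
    have e := congrArg (rename (⇑t)) eB1
    simp only [map_sub, map_mul, rename_X, rename_rename, htp, htq] at e
    exact e
  have esA1 : (X p - X r) * rename (⇑s) A1
      = X p * B1 - X r * rename (⇑s ∘ ⇑t) B1 := by
    have e := congrArg (rename (⇑s)) eA1
    simp only [map_sub, map_mul, rename_X, rename_rename, hsq, hsr] at e
    rwa [hB1s] at e
  have estB1 : (X q - X r) * rename (⇑s ∘ ⇑t) B1
      = X q * rename (⇑s ∘ ⇑t) f - X r * rename (⇑s ∘ ⇑t ∘ ⇑s) f := by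
    have e := congrArg (rename (⇑s)) etB1
    simp only [map_sub, map_mul, rename_X, rename_rename, hsp, hsr] at e
    exact e
  have hLkey : ((X p - X q) * (X q - X r) * (X p - X r)) * L =
      X p ^ 2 * X q * f - X p * X q ^ 2 * rename (⇑s) f
        - X p ^ 2 * X r * rename (⇑t) f + X p * X r ^ 2 * rename (⇑t ∘ ⇑s) f
        + X q ^ 2 * X r * rename (⇑s ∘ ⇑t) f
        - X q * X r ^ 2 * rename (⇑s ∘ ⇑t ∘ ⇑s) f := by
    linear_combination ((X q - X r) * (X p - X r)) * eL
      + (X p * (X p - X r)) * eA1 - (X q * (X q - X r)) * esA1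
      + (X p * X q) * eB1 - (X p * X r) * etB1 + (X q * X r) * estB1
  -- right side
  have etB2 : (X r - X q) * rename (⇑t) B2 = X r * rename (⇑t) f - X q * f := by
    have e := congrArg (rename (⇑t)) eB2
    simp only [map_sub, map_mul, rename_X, rename_rename, htq, htr] at e
    rwa [htt, rename_id] at e
  have hB2t : rename (⇑t) B2 = B2 := by
    apply mul_left_cancel₀ (X_sub_ne hqr)
    linear_combination -etB2 - eB2
  have esB2 : (X p - X r) * rename (⇑s) B2
      = X p * rename (⇑s) f - X r * rename (⇑s ∘ ⇑t) f := by
    have e := congrArg (rename (⇑s)) eB2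
    simp only [map_sub, map_mul, rename_X, rename_rename, hsq, hsr] at e
    exact e
  have etA2 : (X p - X r) * rename (⇑t) A2
      = X p * B2 - X r * rename (⇑t ∘ ⇑s) B2 := by
    have e := congrArg (rename (⇑t)) eA2
    simp only [map_sub, map_mul, rename_X, rename_rename, htp, htq] at e
    rwa [hB2t] at e
  have etsB2 : (X p - X q) * rename (⇑t ∘ ⇑s) B2
      = X p * rename (⇑t ∘ ⇑s) f - X q * rename (⇑s ∘ ⇑t ∘ ⇑s) f := by
    have e := congrArg (rename (⇑t)) esB2
    simp only [map_sub, map_mul, rename_X, rename_rename, htp, htr] at e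
    rwa [hbraid] at e
  have hRkey : ((X p - X q) * (X q - X r) * (X p - X r)) * R =
      X p ^ 2 * X q * f - X p * X q ^ 2 * rename (⇑s) f
        - X p ^ 2 * X r * rename (⇑t) f + X p * X r ^ 2 * rename (⇑t ∘ ⇑s) f
        + X q ^ 2 * X r * rename (⇑s ∘ ⇑t) f
        - X q * X r ^ 2 * rename (⇑s ∘ ⇑t ∘ ⇑s) f := by
    linear_combination ((X p - X q) * (X p - X r)) * eR
      + (X q * (X p - X r)) * eA2 - (X r * (X p - X q)) * etA2
      + (X p ^ 2) * eB2 - (X q ^ 2) * esB2 + (X r ^ 2) * etsB2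
  have hD : ((X p - X q) * (X q - X r) * (X p - X r) : MvPolynomial (Fin n) ℚ) ≠ 0 :=
    mul_ne_zero (mul_ne_zero (X_sub_ne hpq) (X_sub_ne hqr)) (X_sub_ne hpr)
  exact mul_left_cancel₀ hD (hLkey.trans hRkey.symm)

lemma piOp_comm {n i j : ℕ} (hi : i + 1 < n) (hj : j + 1 < n)
    (hij : i + 2 ≤ j ∨ j + 2 ≤ i) (f : MvPolynomial (Fin n) ℚ) :
    piOp n i (piOp n j f) = piOp n j (piOp n i f) := by
  obtain ⟨a, ha⟩ : ∃ a : Fin n, a.val = i := ⟨⟨i, by omega⟩, rfl⟩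
  obtain ⟨a', ha'⟩ : ∃ x : Fin n, x.val = i + 1 := ⟨⟨i + 1, by omega⟩, rfl⟩
  obtain ⟨b, hb⟩ : ∃ b : Fin n, b.val = j := ⟨⟨j, by omega⟩, rfl⟩
  obtain ⟨b', hb'⟩ : ∃ x : Fin n, x.val = j + 1 := ⟨⟨j + 1, by omega⟩, rfl⟩
  have haa : a ≠ a' := by rw [Fin.ne_iff_vne]; omega
  have hbb : b ≠ b' := by rw [Fin.ne_iff_vne]; omega
  have hab : a ≠ b := by rw [Fin.ne_iff_vne]; omega
  have hab' : a ≠ b' := by rw [Fin.ne_iff_vne]; omega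
  have ha'b : a' ≠ b := by rw [Fin.ne_iff_vne]; omega
  have ha'b' : a' ≠ b' := by rw [Fin.ne_iff_vne]; omega
  set s := Equiv.swap a a' with hs
  set t := Equiv.swap b b' with ht
  have hsa : s a = a' := Equiv.swap_apply_left a a'
  have hsa' : s a' = a := Equiv.swap_apply_right a a'
  have hsb : s b = b := Equiv.swap_apply_of_ne_of_ne hab.symm ha'b.symm
  have hsb' : s b' = b' := Equiv.swap_apply_of_ne_of_ne hab'.symm ha'b'.symm
  have htb : t b = b' := Equiv.swap_apply_left b b'
  have htb' : t b' = b := Equiv.swap_apply_right b b'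
  have hta : t a = a := Equiv.swap_apply_of_ne_of_ne hab hab'
  have hta' : t a' = a' := Equiv.swap_apply_of_ne_of_ne ha'b ha'b'
  have hdisj : Equiv.Perm.Disjoint s t := by
    intro x
    rcases eq_or_ne x a with rfl | hxa
    · right; exact Equiv.swap_apply_of_ne_of_ne hab hab'
    rcases eq_or_ne x a' with rfl | hxa'
    · right; exact Equiv.swap_apply_of_ne_of_ne ha'b ha'b'
    · left; exact Equiv.swap_apply_of_ne_of_ne hxa hxa'
  have hcomm : (⇑t ∘ ⇑s : Fin n → Fin n) = ⇑s ∘ ⇑t := by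
    funext x
    have h1 : (t * s) x = (s * t) x := by rw [hdisj.commute.eq]
    simpa [Equiv.Perm.mul_apply] using h1
  set B1 := piOp n j f with hB1
  set L := piOp n i B1 with hL
  set B2 := piOp n i f with hB2
  set R := piOp n j B2 with hR
  have eB1 : (X b - X b') * B1 = X b * f - X b' * rename (⇑t) f := by
    have e := piOp_spec' hj b b' hb (by omega) f
    rwa [map_mul, rename_X, htb] at e
  have eL : (X a - X a') * L = X a * B1 - X a' * rename (⇑s) B1 := by
    have e := piOp_spec' hi a a' ha (by omega) B1
    rwa [map_mul, rename_X, hsa] at e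
  have esB1 : (X b - X b') * rename (⇑s) B1
      = X b * rename (⇑s) f - X b' * rename (⇑s ∘ ⇑t) f := by
    have e := congrArg (rename (⇑s)) eB1
    simp only [map_sub, map_mul, rename_X, rename_rename, hsb, hsb'] at e
    exact e
  have eB2 : (X a - X a') * B2 = X a * f - X a' * rename (⇑s) f := by
    have e := piOp_spec' hi a a' ha (by omega) f
    rwa [map_mul, rename_X, hsa] at e
  have eR : (X b - X b') * R = X b * B2 - X b' * rename (⇑t) B2 := by
    have e := piOp_spec' hj b b' hb (by omega) B2
    rwa [map_mul, rename_X, htb] at e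
  have etB2 : (X a - X a') * rename (⇑t) B2
      = X a * rename (⇑t) f - X a' * rename (⇑s ∘ ⇑t) f := by
    have e := congrArg (rename (⇑t)) eB2
    simp only [map_sub, map_mul, rename_X, rename_rename, hta, hta'] at e
    rwa [hcomm] at e
  have hLkey : ((X a - X a') * (X b - X b')) * L =
      X a * X b * f - X a * X b' * rename (⇑t) f - X a' * X b * rename (⇑s) f
        + X a' * X b' * rename (⇑s ∘ ⇑t) f := by
    linear_combination (X b - X b') * eL + X a * eB1 - X a' * esB1
  have hRkey : ((X a - X a') * (X b - X b')) * R =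
      X a * X b * f - X a * X b' * rename (⇑t) f - X a' * X b * rename (⇑s) f
        + X a' * X b' * rename (⇑s ∘ ⇑t) f := by
    linear_combination (X a - X a') * eR + X b * eB2 - X b' * etB2
  have hD : ((X a - X a') * (X b - X b') : MvPolynomial (Fin n) ℚ) ≠ 0 :=
    mul_ne_zero (X_sub_ne haa) (X_sub_ne hbb)
  exact mul_left_cancel₀ hD (hLkey.trans hRkey.symm)

lemma sT_eq {n i : ℕ} (h : i + 1 < n) :
    sT n i = Equiv.swap ⟨i, Nat.lt_of_succ_lt h⟩ ⟨i + 1, h⟩ := by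
  rw [sT, dif_pos h]

lemma sT_mul_self {n i : ℕ} (h : i + 1 < n) : sT n i * sT n i = 1 := by
  rw [sT_eq h, Equiv.swap_mul_self]

lemma adjSwap_lt_iff {n i : ℕ} (h : i + 1 < n) {m1 m2 : Fin n}
    (h1 : ¬(m1 = (⟨i, Nat.lt_of_succ_lt h⟩ : Fin n) ∧ m2 = ⟨i + 1, h⟩))
    (h2 : ¬(m1 = (⟨i + 1, h⟩ : Fin n) ∧ m2 = ⟨i, Nat.lt_of_succ_lt h⟩)) :
    Equiv.swap (⟨i, Nat.lt_of_succ_lt h⟩ : Fin n) ⟨i + 1, h⟩ m1 <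
      Equiv.swap (⟨i, Nat.lt_of_succ_lt h⟩ : Fin n) ⟨i + 1, h⟩ m2 ↔ m1 < m2 := by
  simp only [Equiv.swap_apply_def]
  rw [not_and_or] at h1 h2
  split_ifs <;>
    simp_all only [Fin.lt_def, Fin.ext_iff, Fin.val_mk, not_and, ne_eq,
      not_true_eq_false, not_false_eq_true, or_self, false_or, or_false] <;>
    omega

lemma invCount_sT_mul_of_lt {n i : ℕ} (h : i + 1 < n) (σ : Equiv.Perm (Fin n))
    (hd : σ⁻¹ (⟨i, Nat.lt_of_succ_lt h⟩ : Fin n) < σ⁻¹ ⟨i + 1, h⟩) :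
    invCount (sT n i * σ) = invCount σ + 1 := by
  set a : Fin n := ⟨i, Nat.lt_of_succ_lt h⟩ with ha
  set b : Fin n := ⟨i + 1, h⟩ with hb
  set x := σ⁻¹ a with hx
  set y := σ⁻¹ b with hy
  have hσx : σ x = a := σ.apply_symm_apply a
  have hσy : σ y = b := σ.apply_symm_apply b
  have hab : a < b := by simp [ha, hb, Fin.lt_def]
  have key : (Finset.univ.filter
        (fun p : Fin n × Fin n => p.1 < p.2 ∧ (sT n i * σ) p.2 < (sT n i * σ) p.1))
      = insert (x, y) (Finset.univ.filter
        (fun p : Fin n × Fin n => p.1 < p.2 ∧ σ p.2 < σ p.1)) := by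
    ext ⟨p1, p2⟩
    simp only [Finset.mem_filter, Finset.mem_insert, Finset.mem_univ, true_and,
      sT_eq h, Equiv.Perm.mul_apply, Prod.mk.injEq]
    constructor
    · rintro ⟨hlt, hinv⟩
      by_cases hc : (σ p2 = a ∧ σ p1 = b) ∨ (σ p2 = b ∧ σ p1 = a)
      · left
        rcases hc with ⟨h3, h4⟩ | ⟨h3, h4⟩
        · exfalso
          have hp2 : p2 = x := by rw [hx, ← h3, show ∀ z, σ⁻¹ (σ z) = z from σ.symm_apply_apply]
          have hp1 : p1 = y := by rw [hy, ← h4, show ∀ z, σ⁻¹ (σ z) = z from σ.symm_apply_apply]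
          rw [hp1, hp2] at hlt
          exact absurd (hlt.trans hd) (lt_irrefl _)
        · constructor
          · rw [hx, ← h4, show ∀ z, σ⁻¹ (σ z) = z from σ.symm_apply_apply]
          · rw [hy, ← h3, show ∀ z, σ⁻¹ (σ z) = z from σ.symm_apply_apply]
      · right
        rw [not_or] at hc
        refine ⟨hlt, ?_⟩
        rwa [adjSwap_lt_iff h hc.1 hc.2] at hinv
    · rintro (⟨hp1, hp2⟩ | ⟨hlt, hinv⟩)
      · subst hp1; subst hp2
        refine ⟨hd, ?_⟩
        rw [hσx, hσy, Equiv.swap_apply_right, Equiv.swap_apply_left]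
        exact hab
      · refine ⟨hlt, ?_⟩
        have hc1 : ¬(σ p2 = a ∧ σ p1 = b) := by
          rintro ⟨h3, h4⟩
          have hp2 : p2 = x := by rw [hx, ← h3, show ∀ z, σ⁻¹ (σ z) = z from σ.symm_apply_apply]
          have hp1 : p1 = y := by rw [hy, ← h4, show ∀ z, σ⁻¹ (σ z) = z from σ.symm_apply_apply]
          rw [hp1, hp2] at hlt
          exact absurd (hlt.trans hd) (lt_irrefl _)
        have hc2 : ¬(σ p2 = b ∧ σ p1 = a) := by
          rintro ⟨h3, h4⟩
          rw [h3, h4] at hinv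
          exact absurd (hab.trans hinv) (lt_irrefl _)
        rwa [adjSwap_lt_iff h hc1 hc2]
  have hnot : (x, y) ∉ Finset.univ.filter
      (fun p : Fin n × Fin n => p.1 < p.2 ∧ σ p.2 < σ p.1) := by
    simp only [Finset.mem_filter, Finset.mem_univ, true_and, not_and]
    intro _
    rw [hσx, hσy]
    exact not_lt_of_gt hab
  rw [invCount, invCount, key, Finset.card_insert_of_notMem hnot]

lemma invCount_sT_mul_of_gt {n i : ℕ} (h : i + 1 < n) (σ : Equiv.Perm (Fin n))
    (hd : σ⁻¹ (⟨i + 1, h⟩ : Fin n) < σ⁻¹ ⟨i, Nat.lt_of_succ_lt h⟩) :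
    invCount (sT n i * σ) + 1 = invCount σ := by
  set τ := sT n i * σ with hτ
  have hστ : sT n i * τ = σ := by
    rw [hτ, ← mul_assoc, sT_mul_self h, one_mul]
  have h1 : τ⁻¹ (⟨i, Nat.lt_of_succ_lt h⟩ : Fin n) = σ⁻¹ ⟨i + 1, h⟩ := by
    rw [hτ, mul_inv_rev, Equiv.Perm.mul_apply, sT_eq h, Equiv.swap_inv,
      Equiv.swap_apply_left]
  have h2 : τ⁻¹ (⟨i + 1, h⟩ : Fin n) = σ⁻¹ ⟨i, Nat.lt_of_succ_lt h⟩ := by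
    rw [hτ, mul_inv_rev, Equiv.Perm.mul_apply, sT_eq h, Equiv.swap_inv,
      Equiv.swap_apply_right]
  have := invCount_sT_mul_of_lt h τ (by rw [h1, h2]; exact hd)
  rw [hστ] at this
  omega

lemma invCount_sT_mul {n i : ℕ} (h : i + 1 < n) (σ : Equiv.Perm (Fin n)) :
    (invCount (sT n i * σ) = invCount σ + 1
        ∧ σ⁻¹ (⟨i, Nat.lt_of_succ_lt h⟩ : Fin n) < σ⁻¹ ⟨i + 1, h⟩)
      ∨ (invCount (sT n i * σ) + 1 = invCount σ
        ∧ σ⁻¹ (⟨i + 1, h⟩ : Fin n) < σ⁻¹ ⟨i, Nat.lt_of_succ_lt h⟩) := by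
  have hne : σ⁻¹ (⟨i, Nat.lt_of_succ_lt h⟩ : Fin n) ≠ σ⁻¹ ⟨i + 1, h⟩ := by
    intro hc
    have := σ⁻¹.injective hc
    simp [Fin.ext_iff] at this
  rcases lt_or_gt_of_ne hne with hlt | hgt
  · exact Or.inl ⟨invCount_sT_mul_of_lt h σ hlt, hlt⟩
  · exact Or.inr ⟨invCount_sT_mul_of_gt h σ hgt, hgt⟩

lemma invCount_one {n : ℕ} : invCount (1 : Equiv.Perm (Fin n)) = 0 := by
  rw [invCount, Finset.card_eq_zero, Finset.filter_eq_empty_iff]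
  rintro ⟨p1, p2⟩ _
  simp only [Equiv.Perm.one_apply, not_and]
  exact fun h => not_lt_of_gt h

lemma eq_one_of_invCount_eq_zero {n : ℕ} {σ : Equiv.Perm (Fin n)}
    (h : invCount σ = 0) : σ = 1 := by
  rw [invCount, Finset.card_eq_zero, Finset.filter_eq_empty_iff] at h
  have hsm : StrictMono ⇑σ := by
    intro p1 p2 hlt
    have := h (Finset.mem_univ (p1, p2))
    simp only [not_and] at this
    have hne : σ p1 ≠ σ p2 := fun hc => absurd (σ.injective hc) (ne_of_lt hlt)
    rcases lt_or_gt_of_ne hne with h1 | h1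
    · exact h1
    · exact absurd h1 (this hlt)
  have : ⇑σ = id := by
    apply (StrictMono.range_inj hsm strictMono_id).mp
    rw [Set.range_id, Equiv.range_eq_univ]
  ext x
  simp [this]

lemma invCount_prod_le {n : ℕ} (w : List ℕ) (hw : ∀ i ∈ w, i + 1 < n) :
    invCount ((w.map (sT n)).prod) ≤ w.length := by
  induction w with
  | nil => simp [invCount_one]
  | cons i u ih =>
      have hi : i + 1 < n := hw i (by simp)
      have hu : ∀ j ∈ u, j + 1 < n := fun j hj => hw j (by simp [hj])
      rw [List.map_cons, List.prod_cons, List.length_cons]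
      rcases invCount_sT_mul hi ((u.map (sT n)).prod) with ⟨hc, _⟩ | ⟨hc, _⟩ <;>
        have := ih hu <;> omega

lemma exists_descent {n : ℕ} {σ : Equiv.Perm (Fin n)} (hσ : σ ≠ 1) :
    ∃ i, ∃ hi : i + 1 < n,
      σ⁻¹ (⟨i + 1, hi⟩ : Fin n) < σ⁻¹ ⟨i, Nat.lt_of_succ_lt hi⟩ := by
  by_contra hc
  push_neg at hc
  have hmono : ∀ i, ∀ hi : i + 1 < n,
      σ⁻¹ (⟨i, Nat.lt_of_succ_lt hi⟩ : Fin n) < σ⁻¹ ⟨i + 1, hi⟩ := by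
    intro i hi
    have h1 := hc i hi
    have hne : σ⁻¹ (⟨i, Nat.lt_of_succ_lt hi⟩ : Fin n) ≠ σ⁻¹ ⟨i + 1, hi⟩ := by
      intro hcc
      have := σ⁻¹.injective hcc
      simp [Fin.ext_iff] at this
    rcases lt_or_gt_of_ne hne with h2 | h2
    · exact h2
    · exact absurd h2 (not_lt_of_ge h1)
  have hsm : StrictMono ⇑σ⁻¹ := by
    cases n with
    | zero => intro a b _; exact a.elim0
    | succ m =>
        rw [Fin.strictMono_iff_lt_succ]
        intro k
        have hk : k.val + 1 < m + 1 := by omega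
        have e1 : Fin.castSucc k = (⟨k.val, Nat.lt_of_succ_lt hk⟩ : Fin (m + 1)) := by
          ext; simp
        have e2 : Fin.succ k = (⟨k.val + 1, hk⟩ : Fin (m + 1)) := by
          ext; simp
        rw [e1, e2]
        exact hmono k.val hk
  have hid : ⇑σ⁻¹ = id := by
    apply (StrictMono.range_inj hsm strictMono_id).mp
    rw [Set.range_id, Equiv.range_eq_univ]
  apply hσ
  have : σ⁻¹ = 1 := by ext x; simp [hid]
  calc σ = (σ⁻¹)⁻¹ := by rw [inv_inv]
  _ = 1 := by rw [this]; rfl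

lemma exists_reducedWord {n : ℕ} (σ : Equiv.Perm (Fin n)) :
    ∃ w : List ℕ, (∀ i ∈ w, i + 1 < n) ∧ (w.map (sT n)).prod = σ
      ∧ w.length = invCount σ := by
  generalize hm : invCount σ = m
  induction m using Nat.strong_induction_on generalizing σ with
  | _ m IH =>
    rcases eq_or_ne σ 1 with rfl | hσ
    · exact ⟨[], by simp, by simp, by simp [← hm, invCount_one]⟩
    · obtain ⟨i, hi, hd⟩ := exists_descent hσ
      have hstep := invCount_sT_mul_of_gt hi σ hd
      obtain ⟨w, hw1, hw2, hw3⟩ := IH (invCount (sT n i * σ)) (by omega)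
        (sT n i * σ) rfl
      refine ⟨i :: w, ?_, ?_, ?_⟩
      · intro j hj
        rcases List.mem_cons.mp hj with rfl | hj'
        · exact hi
        · exact hw1 j hj'
      · rw [List.map_cons, List.prod_cons, hw2, ← mul_assoc, sT_mul_self hi,
          one_mul]
      · rw [List.length_cons, hw3]; omega

lemma sT_sT {n i : ℕ} (hi : i + 1 < n) (ρ : Equiv.Perm (Fin n)) :
    sT n i * (sT n i * ρ) = ρ := by
  rw [← mul_assoc, sT_mul_self hi, one_mul]

lemma sT_inv_apply {n i : ℕ} (hi : i + 1 < n) (σ : Equiv.Perm (Fin n)) (x : Fin n) :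
    (sT n i * σ)⁻¹ x = σ⁻¹ (sT n i x) := by
  rw [mul_inv_rev, Equiv.Perm.mul_apply]
  congr 1
  rw [sT_eq hi, Equiv.swap_inv]

lemma sT_apply_of_ne {n i : ℕ} (hi : i + 1 < n) (x : Fin n) (h1 : x.val ≠ i)
    (h2 : x.val ≠ i + 1) : sT n i x = x := by
  rw [sT_eq hi]
  exact Equiv.swap_apply_of_ne_of_ne (by rw [Fin.ne_iff_vne]; exact h1)
    (by rw [Fin.ne_iff_vne]; exact h2)

lemma sT_apply_fst {n i : ℕ} (hi : i + 1 < n) :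
    sT n i (⟨i, Nat.lt_of_succ_lt hi⟩ : Fin n) = ⟨i + 1, hi⟩ := by
  rw [sT_eq hi]; exact Equiv.swap_apply_left _ _

lemma sT_apply_snd {n i : ℕ} (hi : i + 1 < n) :
    sT n i (⟨i + 1, hi⟩ : Fin n) = ⟨i, Nat.lt_of_succ_lt hi⟩ := by
  rw [sT_eq hi]; exact Equiv.swap_apply_right _ _

lemma descent_far {n i j : ℕ} (hi : i + 1 < n) (hj : j + 1 < n)
    (hij : i + 2 ≤ j ∨ j + 2 ≤ i) (σ : Equiv.Perm (Fin n))
    (hd : σ⁻¹ (⟨i + 1, hi⟩ : Fin n) < σ⁻¹ ⟨i, Nat.lt_of_succ_lt hi⟩) :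
    (sT n j * σ)⁻¹ (⟨i + 1, hi⟩ : Fin n)
      < (sT n j * σ)⁻¹ ⟨i, Nat.lt_of_succ_lt hi⟩ := by
  rw [sT_inv_apply hj, sT_inv_apply hj,
    sT_apply_of_ne hj _ (by simp only [Fin.val_mk]; omega) (by simp only [Fin.val_mk]; omega),
    sT_apply_of_ne hj _ (by simp only [Fin.val_mk]; omega) (by simp only [Fin.val_mk]; omega)]
  exact hd

lemma descent_adj1 {n i : ℕ} (h : i + 2 < n) (σ : Equiv.Perm (Fin n))
    (hd1 : σ⁻¹ (⟨i + 1, by omega⟩ : Fin n) < σ⁻¹ ⟨i, by omega⟩)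
    (hd2 : σ⁻¹ (⟨i + 2, h⟩ : Fin n) < σ⁻¹ ⟨i + 1, by omega⟩) :
    (sT n i * σ)⁻¹ (⟨i + 2, h⟩ : Fin n) < (sT n i * σ)⁻¹ ⟨i + 1, by omega⟩ := by
  have hi : i + 1 < n := by omega
  rw [sT_inv_apply hi, sT_inv_apply hi,
    sT_apply_of_ne hi _ (by simp only [Fin.val_mk]; omega) (by simp only [Fin.val_mk]; omega)]
  have e : sT n i (⟨i + 1, by omega⟩ : Fin n) = ⟨i, by omega⟩ := sT_apply_snd hi
  rw [e]
  exact lt_trans hd2 hd1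

lemma descent_adj2 {n i : ℕ} (h : i + 2 < n) (σ : Equiv.Perm (Fin n))
    (hd2 : σ⁻¹ (⟨i + 2, h⟩ : Fin n) < σ⁻¹ ⟨i + 1, by omega⟩) :
    (sT n (i + 1) * (sT n i * σ))⁻¹ (⟨i + 1, by omega⟩ : Fin n)
      < (sT n (i + 1) * (sT n i * σ))⁻¹ ⟨i, by omega⟩ := by
  have hi : i + 1 < n := by omega
  have hj : (i + 1) + 1 < n := by omega
  rw [sT_inv_apply hj, sT_inv_apply hj, sT_inv_apply hi, sT_inv_apply hi]
  have e1 : sT n (i + 1) (⟨i + 1, by omega⟩ : Fin n) = ⟨i + 2, h⟩ :=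
    sT_apply_fst hj
  have e2 : sT n (i + 1) (⟨i, by omega⟩ : Fin n) = ⟨i, by omega⟩ :=
    sT_apply_of_ne hj _ (by simp only [Fin.val_mk]; omega) (by simp only [Fin.val_mk]; omega)
  have e3 : sT n i (⟨i + 2, h⟩ : Fin n) = ⟨i + 2, h⟩ :=
    sT_apply_of_ne hi _ (by simp only [Fin.val_mk]; omega) (by simp only [Fin.val_mk]; omega)
  have e4 : sT n i (⟨i, by omega⟩ : Fin n) = ⟨i + 1, by omega⟩ := sT_apply_fst hi
  rw [e1, e2, e3, e4]
  exact hd2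

lemma sT_comm {n i j : ℕ} (hi : i + 1 < n) (hj : j + 1 < n)
    (hij : i + 2 ≤ j ∨ j + 2 ≤ i) : sT n i * sT n j = sT n j * sT n i := by
  ext x
  simp only [Equiv.Perm.mul_apply]
  rcases eq_or_ne x.val i with hx | hx1
  · rw [sT_apply_of_ne hj _ (by omega) (by omega)]
    have e : sT n i x = ⟨i + 1, hi⟩ := by
      have : x = ⟨i, Nat.lt_of_succ_lt hi⟩ := by rw [Fin.ext_iff]; exact hx
      rw [this]; exact sT_apply_fst hi
    rw [e, sT_apply_of_ne hj _ (by simp only [Fin.val_mk]; omega) (by simp only [Fin.val_mk]; omega)]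
  rcases eq_or_ne x.val (i + 1) with hx | hx2
  · rw [sT_apply_of_ne hj _ (by omega) (by omega)]
    have e : sT n i x = ⟨i, Nat.lt_of_succ_lt hi⟩ := by
      have : x = ⟨i + 1, hi⟩ := by rw [Fin.ext_iff]; exact hx
      rw [this]; exact sT_apply_snd hi
    rw [e, sT_apply_of_ne hj _ (by simp only [Fin.val_mk]; omega) (by simp only [Fin.val_mk]; omega)]
  · rw [sT_apply_of_ne hi _ hx1 hx2]
    rcases eq_or_ne x.val j with hx | hx3
    · have e : sT n j x = ⟨j + 1, hj⟩ := by
        have : x = ⟨j, Nat.lt_of_succ_lt hj⟩ := by rw [Fin.ext_iff]; exact hx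
        rw [this]; exact sT_apply_fst hj
      rw [e, sT_apply_of_ne hi _ (by simp only [Fin.val_mk]; omega) (by simp only [Fin.val_mk]; omega)]
    rcases eq_or_ne x.val (j + 1) with hx | hx4
    · have e : sT n j x = ⟨j, Nat.lt_of_succ_lt hj⟩ := by
        have : x = ⟨j + 1, hj⟩ := by rw [Fin.ext_iff]; exact hx
        rw [this]; exact sT_apply_snd hj
      rw [e, sT_apply_of_ne hi _ (by simp only [Fin.val_mk]; omega) (by simp only [Fin.val_mk]; omega)]
    · rw [sT_apply_of_ne hj _ hx3 hx4, sT_apply_of_ne hi _ hx1 hx2]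

lemma sT_braid {n i : ℕ} (h : i + 2 < n) :
    sT n i * sT n (i + 1) * sT n i = sT n (i + 1) * sT n i * sT n (i + 1) := by
  have hi : i + 1 < n := by omega
  have hj : (i + 1) + 1 < n := by omega
  have hpq : (⟨i, by omega⟩ : Fin n) ≠ ⟨i + 1, by omega⟩ := by
    simp only [ne_eq, Fin.mk.injEq]; omega
  have hpr : (⟨i, by omega⟩ : Fin n) ≠ ⟨i + 2, by omega⟩ := by
    simp only [ne_eq, Fin.mk.injEq]; omega
  have hqr : (⟨i + 1, by omega⟩ : Fin n) ≠ ⟨i + 2, by omega⟩ := by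
    simp only [ne_eq, Fin.mk.injEq]; omega
  have e1 : sT n i = Equiv.swap (⟨i, by omega⟩ : Fin n) ⟨i + 1, by omega⟩ :=
    sT_eq hi
  have e2 : sT n (i + 1) = Equiv.swap (⟨i + 1, by omega⟩ : Fin n) ⟨i + 2, by omega⟩ := by
    rw [sT_eq hj]
  symm
  rw [e1, e2]
  rw [Equiv.swap_mul_swap_mul_swap hpq hpr]
  rw [Equiv.swap_comm (⟨i, by omega⟩ : Fin n) ⟨i + 1, by omega⟩,
    Equiv.swap_comm (⟨i + 1, by omega⟩ : Fin n) ⟨i + 2, by omega⟩,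
    Equiv.swap_mul_swap_mul_swap hqr.symm hpr.symm]
  rw [Equiv.swap_comm]

lemma reduced_cons {n : ℕ} {σ : Equiv.Perm (Fin n)} {i : ℕ} {u : List ℕ}
    (h : IsReducedWordFor n σ (i :: u)) :
    ∃ hi : i + 1 < n,
      IsReducedWordFor n (sT n i * σ) u ∧
      σ⁻¹ (⟨i + 1, hi⟩ : Fin n) < σ⁻¹ ⟨i, Nat.lt_of_succ_lt hi⟩ ∧
      invCount (sT n i * σ) + 1 = invCount σ := by
  obtain ⟨hval, hprod, hlen⟩ := h
  have hi : i + 1 < n := hval i (by simp)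
  have hvalu : ∀ j ∈ u, j + 1 < n := fun j hj => hval j (by simp [hj])
  have hρ : (u.map (sT n)).prod = sT n i * σ := by
    rw [List.map_cons, List.prod_cons] at hprod
    rw [← hprod, sT_sT hi]
  have hub : invCount (sT n i * σ) ≤ u.length := by
    rw [← hρ]; exact invCount_prod_le u hvalu
  rw [List.length_cons] at hlen
  rcases invCount_sT_mul hi σ with ⟨hc, _⟩ | ⟨hc, hd⟩
  · omega
  · exact ⟨hi, ⟨hvalu, hρ, by omega⟩, hd, hc⟩

lemma far_main {n m : ℕ}
    (IH : ∀ m' < m, ∀ (σ : Equiv.Perm (Fin n)) (w₁ w₂ : List ℕ)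
      (f : MvPolynomial (Fin n) ℚ), invCount σ = m' →
      IsReducedWordFor n σ w₁ → IsReducedWordFor n σ w₂ →
      piWord n w₁ f = piWord n w₂ f)
    {σ : Equiv.Perm (Fin n)} (hm : invCount σ = m) {i j : ℕ} {u v : List ℕ}
    (f : MvPolynomial (Fin n) ℚ) (hi : i + 1 < n) (hj : j + 1 < n)
    (hfar : i + 2 ≤ j ∨ j + 2 ≤ i)
    (hru : IsReducedWordFor n (sT n i * σ) u)
    (hrv : IsReducedWordFor n (sT n j * σ) v)
    (hdi : σ⁻¹ (⟨i + 1, hi⟩ : Fin n) < σ⁻¹ ⟨i, Nat.lt_of_succ_lt hi⟩)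
    (hdj : σ⁻¹ (⟨j + 1, hj⟩ : Fin n) < σ⁻¹ ⟨j, Nat.lt_of_succ_lt hj⟩)
    (hci : invCount (sT n i * σ) + 1 = invCount σ)
    (hcj : invCount (sT n j * σ) + 1 = invCount σ) :
    piOp n i (piWord n u f) = piOp n j (piWord n v f) := by
  have hdj' := descent_far hj hi hfar.symm σ hdj
  have hc2 : invCount (sT n j * (sT n i * σ)) + 1 = invCount (sT n i * σ) :=
    invCount_sT_mul_of_gt hj _ hdj'
  obtain ⟨t, ht1, ht2, ht3⟩ := exists_reducedWord (sT n j * (sT n i * σ))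
  have hp2 : sT n i * (sT n j * (sT n i * σ)) = sT n j * σ := by
    calc sT n i * (sT n j * (sT n i * σ))
        = (sT n i * sT n j) * (sT n i * σ) := by rw [mul_assoc]
      _ = (sT n j * sT n i) * (sT n i * σ) := by rw [sT_comm hi hj hfar]
      _ = sT n j * (sT n i * (sT n i * σ)) := by rw [mul_assoc]
      _ = sT n j * σ := by rw [sT_sT hi]
  have hw1t : IsReducedWordFor n (sT n i * σ) (j :: t) := by
    refine ⟨?_, ?_, ?_⟩
    · intro k hk
      rcases List.mem_cons.mp hk with rfl | hk'
      · exact hj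
      · exact ht1 k hk'
    · simp only [List.map_cons, List.prod_cons]
      rw [ht2, sT_sT hj]
    · simp only [List.length_cons]
      omega
  have hw2t : IsReducedWordFor n (sT n j * σ) (i :: t) := by
    refine ⟨?_, ?_, ?_⟩
    · intro k hk
      rcases List.mem_cons.mp hk with rfl | hk'
      · exact hi
      · exact ht1 k hk'
    · simp only [List.map_cons, List.prod_cons]
      rw [ht2, hp2]
    · simp only [List.length_cons]
      omega
  have e1 : piWord n u f = piWord n (j :: t) f :=
    IH (invCount (sT n i * σ)) (by omega) _ u _ f rfl hru hw1t
  have e2 : piWord n v f = piWord n (i :: t) f :=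
    IH (invCount (sT n j * σ)) (by omega) _ v _ f rfl hrv hw2t
  rw [e1, e2]
  exact piOp_comm hi hj hfar (piWord n t f)

lemma adjacent_main {n m : ℕ}
    (IH : ∀ m' < m, ∀ (σ : Equiv.Perm (Fin n)) (w₁ w₂ : List ℕ)
      (f : MvPolynomial (Fin n) ℚ), invCount σ = m' →
      IsReducedWordFor n σ w₁ → IsReducedWordFor n σ w₂ →
      piWord n w₁ f = piWord n w₂ f)
    {σ : Equiv.Perm (Fin n)} (hm : invCount σ = m) {i : ℕ} {u v : List ℕ}
    (f : MvPolynomial (Fin n) ℚ) (h2 : i + 2 < n)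
    (hru : IsReducedWordFor n (sT n i * σ) u)
    (hrv : IsReducedWordFor n (sT n (i + 1) * σ) v)
    (hdi : σ⁻¹ (⟨i + 1, by omega⟩ : Fin n) < σ⁻¹ ⟨i, by omega⟩)
    (hdj : σ⁻¹ (⟨i + 2, h2⟩ : Fin n) < σ⁻¹ ⟨i + 1, by omega⟩)
    (hci : invCount (sT n i * σ) + 1 = invCount σ)
    (hcj : invCount (sT n (i + 1) * σ) + 1 = invCount σ) :
    piOp n i (piWord n u f) = piOp n (i + 1) (piWord n v f) := by
  have hi : i + 1 < n := by omega
  have hj : (i + 1) + 1 < n := by omega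
  have hd2' := descent_adj1 h2 σ hdi hdj
  have hc2 : invCount (sT n (i + 1) * (sT n i * σ)) + 1
      = invCount (sT n i * σ) := invCount_sT_mul_of_gt hj _ hd2'
  have hd3' := descent_adj2 h2 σ hdj
  have hc3 : invCount (sT n i * (sT n (i + 1) * (sT n i * σ))) + 1
      = invCount (sT n (i + 1) * (sT n i * σ)) := invCount_sT_mul_of_gt hi _ hd3'
  obtain ⟨t, ht1, ht2, ht3⟩ :=
    exists_reducedWord (sT n i * (sT n (i + 1) * (sT n i * σ)))
  have hp1 : sT n (i + 1) * (sT n i *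
        (sT n i * (sT n (i + 1) * (sT n i * σ)))) = sT n i * σ := by
    rw [sT_sT hi, sT_sT hj]
  have hp2 : sT n i * (sT n (i + 1) *
        (sT n i * (sT n (i + 1) * (sT n i * σ)))) = sT n (i + 1) * σ := by
    simp only [← mul_assoc]
    rw [sT_braid h2]
    simp only [mul_assoc]
    rw [sT_sT hj, sT_sT hi]
  have hw1t : IsReducedWordFor n (sT n i * σ) ((i + 1) :: i :: t) := by
    refine ⟨?_, ?_, ?_⟩
    · intro k hk
      rcases List.mem_cons.mp hk with rfl | hk'
      · exact hj
      rcases List.mem_cons.mp hk' with rfl | hk''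
      · exact hi
      · exact ht1 k hk''
    · simp only [List.map_cons, List.prod_cons]
      rw [ht2, hp1]
    · simp only [List.length_cons]
      omega
  have hw2t : IsReducedWordFor n (sT n (i + 1) * σ) (i :: (i + 1) :: t) := by
    refine ⟨?_, ?_, ?_⟩
    · intro k hk
      rcases List.mem_cons.mp hk with rfl | hk'
      · exact hi
      rcases List.mem_cons.mp hk' with rfl | hk''
      · exact hj
      · exact ht1 k hk''
    · simp only [List.map_cons, List.prod_cons]
      rw [ht2, hp2]
    · simp only [List.length_cons]
      omega
  have e1 : piWord n u f = piWord n ((i + 1) :: i :: t) f :=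
    IH (invCount (sT n i * σ)) (by omega) _ u _ f rfl hru hw1t
  have e2 : piWord n v f = piWord n (i :: (i + 1) :: t) f :=
    IH (invCount (sT n (i + 1) * σ)) (by omega) _ v _ f rfl hrv hw2t
  rw [e1, e2]
  exact piOp_braid h2 (piWord n t f)

/-- If `w₁` and `w₂` are two reduced words for the same permutation `σ ∈ S_n`, then the
corresponding composites of Demazure operators coincide; hence `π_σ` is well defined. -/
theorem piWord_welldefined (n : ℕ) (hn : 2 ≤ n) (σ : Equiv.Perm (Fin n))
    (w₁ w₂ : List ℕ) (h₁ : IsReducedWordFor n σ w₁) (h₂ : IsReducedWordFor n σ w₂)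
    (f : MvPolynomial (Fin n) ℚ) :
    piWord n w₁ f = piWord n w₂ f := by
  suffices H : ∀ m (σ : Equiv.Perm (Fin n)) (w₁ w₂ : List ℕ)
      (f : MvPolynomial (Fin n) ℚ),
      invCount σ = m → IsReducedWordFor n σ w₁ → IsReducedWordFor n σ w₂ →
      piWord n w₁ f = piWord n w₂ f by
    exact H _ σ w₁ w₂ f rfl h₁ h₂
  clear h₁ h₂ w₁ w₂ σ f
  intro m
  induction m using Nat.strong_induction_on with
  | _ m IH =>
  intro σ w₁ w₂ f hm hw₁ hw₂
  rcases w₁ with _ | ⟨i, u⟩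
  · have h0 : invCount σ = 0 := by
      have := hw₁.2.2; simpa using this.symm
    have hlen := hw₂.2.2
    rw [h0, List.length_eq_zero_iff] at hlen
    subst hlen; rfl
  rcases w₂ with _ | ⟨j, v⟩
  · have h0 : invCount σ = 0 := by
      have := hw₂.2.2; simpa using this.symm
    have hlen := hw₁.2.2
    rw [h0] at hlen
    simp at hlen
  obtain ⟨hi, hru, hdi, hci⟩ := reduced_cons hw₁
  obtain ⟨hj, hrv, hdj, hcj⟩ := reduced_cons hw₂
  rcases eq_or_ne i j with rfl | hij
  · have e : piWord n u f = piWord n v f :=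
      IH (invCount (sT n i * σ)) (by omega) _ u v f rfl hru hrv
    show piOp n i (piWord n u f) = piOp n i (piWord n v f)
    rw [e]
  rcases (by omega : (i + 2 ≤ j ∨ j + 2 ≤ i) ∨ j = i + 1 ∨ i = j + 1) with
    hfar | hadj | hadj
  · exact far_main IH hm f hi hj hfar hru hrv hdi hdj hci hcj
  · subst hadj
    exact adjacent_main IH hm f hj hru hrv hdi hdj hci hcj
  · subst hadj
    exact (adjacent_main IH hm f hi hrv hru hdj hdi hcj hci).symm
end

section
/- Let n ≥ 1 and let σ ∈ S_n avoid the permutation pattern 132, i.e. there are no indices i < j < k with σ(i) < σ(k) < σ(j). Then there is exactly one subset E of the positions {(i,j) : 1 ≤ j ≤ i ≤ n−1} whose associated word is a reduced word for σ; equivalently, there is a unique reduced Kogan face of type σ. -/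
/-- `E` is a set of positions `(i, j)` with `1 ≤ j ≤ i ≤ n − 1`, determining a Kogan
face of a Gelfand–Tsetlin polytope of size `n` (cut out by the equations
`x i j = x (i+1) j` for `(i, j) ∈ E`). -/
def IsKoganPositions (n : ℕ) (E : Finset (ℕ × ℕ)) : Prop :=
  ∀ p ∈ E, 1 ≤ p.2 ∧ p.2 ≤ p.1 ∧ p.1 + 1 ≤ n

/-- The word of a set `E` of Kogan positions: list the positions `(i, j) ∈ E` first by
increasing `i` and, within each `i`, by increasing `j` (lexicographically), and record
for each the simple transposition `s_{n−i+j−1}` (so, in the `0`-based indexing of the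
letters used here, the letter `n − i + j − 2`). -/
def koganWord (n : ℕ) (E : Finset (ℕ × ℕ)) : List ℕ :=
  ((E.image (toLex : ℕ × ℕ → ℕ ×ₗ ℕ)).sort (· ≤ ·)).map
    (fun q => n - (ofLex q).1 + (ofLex q).2 - 2)

namespace KoganAux

variable {n : ℕ}

lemma sT_coe {k : ℕ} (h : k + 1 < n) (x : Fin n) :
    ((sT n k) x : ℕ) = if (x : ℕ) = k then k + 1 else if (x : ℕ) = k + 1 then k else x := by
  rw [sT, dif_pos h, Equiv.swap_apply_def]
  split_ifs with h1 h2 h3 h4 h5 <;> simp_all [Fin.ext_iff]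

lemma sT_invol {k : ℕ} (h : k + 1 < n) (x : Fin n) : (sT n k) ((sT n k) x) = x := by
  rw [sT, dif_pos h]; exact Equiv.swap_apply_self _ _ _

lemma sT_mono_pair {k : ℕ} (h : k + 1 < n) {x y : Fin n} (hxy : x < y)
    (hq : ¬((x : ℕ) = k ∧ (y : ℕ) = k + 1)) : (sT n k) x < (sT n k) y := by
  have hx := sT_coe h x; have hy := sT_coe h y
  have hyn := y.isLt
  rw [Fin.lt_def] at hxy ⊢
  rw [hx, hy]
  split_ifs <;> omega

lemma lenStep {k : ℕ} (h : k + 1 < n) (π : Equiv.Perm (Fin n)) :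
    ((π ⟨k, Nat.lt_of_succ_lt h⟩ < π ⟨k + 1, h⟩) →
        invCount (π * sT n k) = invCount π + 1)
  ∧ ((π ⟨k + 1, h⟩ < π ⟨k, Nat.lt_of_succ_lt h⟩) →
        invCount π = invCount (π * sT n k) + 1) := by
  classical
  set a : Fin n := ⟨k, Nat.lt_of_succ_lt h⟩ with ha
  set b : Fin n := ⟨k + 1, h⟩ with hb
  set s := sT n k with hs
  set q : Fin n × Fin n := (a, b) with hq
  set A := Finset.univ.filter (fun p : Fin n × Fin n => p.1 < p.2 ∧ π p.2 < π p.1) with hA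
  set B := Finset.univ.filter
      (fun p : Fin n × Fin n => p.1 < p.2 ∧ (π * s) p.2 < (π * s) p.1) with hB
  have memA : ∀ p : Fin n × Fin n, p ∈ A ↔ p.1 < p.2 ∧ π p.2 < π p.1 := by
    intro p; simp [hA]
  have memB : ∀ p : Fin n × Fin n, p ∈ B ↔ p.1 < p.2 ∧ π (s p.2) < π (s p.1) := by
    intro p; rw [hB, Finset.mem_filter]; simp [Equiv.Perm.mul_apply]
  have hmono : ∀ p : Fin n × Fin n, p.1 < p.2 → p ≠ q → s p.1 < s p.2 := by
    rintro ⟨x, y⟩ hxy hne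
    refine sT_mono_pair h hxy ?_
    rintro ⟨h1, h2⟩
    exact hne (by rw [hq, Prod.ext_iff]; exact ⟨Fin.ext h1, Fin.ext h2⟩)
  have hsab : s a = b := by
    apply Fin.ext; rw [hs, sT_coe h]; simp [ha, hb]
  have hsba : s b = a := by
    apply Fin.ext; rw [hs, sT_coe h]; simp [ha, hb]
  have hba : ¬ (b < a) := by rw [Fin.lt_def]; simp [ha, hb]
  have key : (B.erase q).card = (A.erase q).card := by
    apply Finset.card_bij' (i := fun p _ => (s p.1, s p.2)) (j := fun p _ => (s p.1, s p.2))
    · intro p hp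
      rw [Finset.mem_erase] at hp ⊢
      obtain ⟨hpq, hp⟩ := hp
      rw [memB] at hp
      constructor
      · intro he
        have e1 : s p.1 = a := congrArg Prod.fst he
        have e2 : s p.2 = b := congrArg Prod.snd he
        have h1 : p.1 = b := by rw [← hsab, ← e1]; exact (sT_invol h _).symm
        have h2 : p.2 = a := by rw [← hsba, ← e2]; exact (sT_invol h _).symm
        exact hba (h1 ▸ h2 ▸ hp.1)
      · rw [memA]
        exact ⟨hmono p hp.1 hpq, hp.2⟩
    · intro p hp
      rw [Finset.mem_erase] at hp ⊢
      obtain ⟨hpq, hp⟩ := hp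
      rw [memA] at hp
      constructor
      · intro he
        have e1 : s p.1 = a := congrArg Prod.fst he
        have e2 : s p.2 = b := congrArg Prod.snd he
        have h1 : p.1 = b := by rw [← hsab, ← e1]; exact (sT_invol h _).symm
        have h2 : p.2 = a := by rw [← hsba, ← e2]; exact (sT_invol h _).symm
        exact hba (h1 ▸ h2 ▸ hp.1)
      · rw [memB]
        refine ⟨hmono p hp.1 hpq, ?_⟩
        rw [sT_invol h, sT_invol h]
        exact hp.2
    · intro p _; ext <;> simp [hs, sT_invol h]
    · intro p _; ext <;> simp [hs, sT_invol h]
  have hab : a < b := by rw [Fin.lt_def]; simp [ha, hb]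
  have hqB : q ∈ B ↔ π a < π b := by
    rw [memB]; simp only [hq]; rw [hsab, hsba]; simp [hab]
  have hqA : q ∈ A ↔ π b < π a := by
    rw [memA]; simp [hq, hab]
  have hBc : invCount (π * s) = B.card := rfl
  have hAc : invCount π = A.card := rfl
  constructor
  · intro hasc
    have hqB' : q ∈ B := hqB.mpr hasc
    have hqA' : q ∉ A := fun hh => lt_asymm hasc (hqA.mp hh)
    rw [hBc, hAc, ← Finset.card_erase_add_one hqB', key, Finset.erase_eq_of_notMem hqA']
  · intro hdesc
    have hqA' : q ∈ A := hqA.mpr hdesc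
    have hqB' : q ∉ B := fun hh => lt_asymm hdesc (hqB.mp hh)
    rw [hBc, hAc, ← Finset.card_erase_add_one hqA', ← key, Finset.erase_eq_of_notMem hqB']


lemma sT_fix {k x : ℕ} (h : k + 1 < n) (hx : x < n) (hne : x ≠ k) (hne2 : x ≠ k + 1) :
    (sT n k) ⟨x, hx⟩ = ⟨x, hx⟩ := by
  apply Fin.ext
  rw [sT_coe h]
  show (if x = k then k + 1 else if x = k + 1 then k else x) = x
  rw [if_neg hne, if_neg hne2]

def wp (n : ℕ) (u : List ℕ) : Equiv.Perm (Fin n) := (u.map (sT n)).prod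

lemma wp_nil : wp n [] = 1 := rfl

lemma wp_cons (a : ℕ) (u : List ℕ) : wp n (a :: u) = sT n a * wp n u := by
  simp [wp]

lemma wp_append (u v : List ℕ) : wp n (u ++ v) = wp n u * wp n v := by
  simp [wp]

lemma wp_concat (u : List ℕ) (a : ℕ) : wp n (u ++ [a]) = wp n u * sT n a := by
  simp [wp]

lemma invCount_one' : invCount (1 : Equiv.Perm (Fin n)) = 0 := by
  rw [invCount, Finset.card_eq_zero, Finset.filter_eq_empty_iff]
  rintro ⟨a, b⟩ _
  simp only [Equiv.Perm.one_apply, not_and]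
  intro h h'
  exact absurd h' (lt_asymm h)

lemma lenStep_le {k : ℕ} (h : k + 1 < n) (π : Equiv.Perm (Fin n)) :
    invCount (π * sT n k) ≤ invCount π + 1 := by
  rcases lt_trichotomy (π ⟨k, Nat.lt_of_succ_lt h⟩) (π ⟨k + 1, h⟩) with hlt | heq | hgt
  · exact le_of_eq ((lenStep h π).1 hlt)
  · exact absurd (π.injective heq) (by simp [Fin.ext_iff])
  · have := (lenStep h π).2 hgt
    omega

lemma wp_le (u : List ℕ) (hu : ∀ a ∈ u, a + 1 < n) (π : Equiv.Perm (Fin n)) :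
    invCount (π * wp n u) ≤ invCount π + u.length := by
  induction u generalizing π with
  | nil => simp [wp_nil]
  | cons a u ih =>
    rw [wp_cons, ← mul_assoc]
    have h1 := ih (fun b hb => hu b (List.mem_cons_of_mem a hb)) (π * sT n a)
    have h2 := lenStep_le (hu a (List.mem_cons_self)) π
    simp only [List.length_cons]
    omega

lemma wp_le' (u : List ℕ) (hu : ∀ a ∈ u, a + 1 < n) :
    invCount (wp n u) ≤ u.length := by
  have := wp_le u hu 1
  rw [one_mul, invCount_one'] at this
  omega

lemma wp_fix {u : List ℕ} {c : ℕ} (hu : ∀ a ∈ u, c ≤ a ∧ a + 1 < n) {x : ℕ} (hx : x < n)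
    (hxc : x < c) : wp n u ⟨x, hx⟩ = ⟨x, hx⟩ := by
  induction u with
  | nil => rfl
  | cons a u ih =>
    rw [wp_cons, Equiv.Perm.mul_apply,
      ih (fun b hb => hu b (List.mem_cons_of_mem a hb))]
    obtain ⟨hca, han⟩ := hu a (List.mem_cons_self)
    exact sT_fix han hx (by omega) (by omega)

lemma vRange (t : ℕ) : ∀ b : ℕ, b + t < n → ∀ x : Fin n,
    ((wp n (List.range' b t) x : Fin n) : ℕ) =
      if b ≤ (x : ℕ) ∧ (x : ℕ) < b + t then (x : ℕ) + 1
      else if (x : ℕ) = b + t then b else (x : ℕ) := by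
  induction t with
  | zero =>
    intro b _ x
    simp only [List.range', wp_nil, Equiv.Perm.one_apply, Nat.add_zero]
    split_ifs <;> omega
  | succ t ih =>
    intro b hb x
    have hxlt := x.isLt
    rw [List.range'_succ, wp_cons, Equiv.Perm.mul_apply,
      sT_coe (show b + 1 < n by omega), ih (b + 1) (by omega) x]
    split_ifs <;> omega

lemma fix_ge {τ : Equiv.Perm (Fin n)} {b' : ℕ} (hτ : ∀ x : Fin n, (x : ℕ) < b' → τ x = x)
    {y : Fin n} (hy : b' ≤ (y : ℕ)) : b' ≤ ((τ y : Fin n) : ℕ) := by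
  by_contra hcon
  push_neg at hcon
  have := τ.injective (hτ (τ y) hcon)
  omega

lemma addChain (τ : Equiv.Perm (Fin n)) (b : ℕ)
    (hτ : ∀ x : Fin n, (x : ℕ) < b + 1 → τ x = x) :
    ∀ t : ℕ, b + t < n →
    invCount (τ * wp n (List.range' b t)) = invCount τ + t := by
  intro t
  induction t with
  | zero => intro _; simp [wp_nil, invCount_one']
  | succ t ih =>
    intro hbt
    have hbt' : b + t < n := by omega
    have hrc : List.range' b (t + 1) = List.range' b t ++ [b + t] := by
      have := List.range'_concat (s := b) (n := t) (step := 1)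
      simpa using this
    rw [hrc, wp_concat, ← mul_assoc]
    set π := τ * wp n (List.range' b t) with hπ
    have h1 : π ⟨b + t, hbt'⟩ = ⟨b, by omega⟩ := by
      rw [hπ, Equiv.Perm.mul_apply]
      have hv : wp n (List.range' b t) ⟨b + t, hbt'⟩ = ⟨b, by omega⟩ := by
        apply Fin.ext
        rw [vRange t b hbt']
        simp
      rw [hv]
      exact hτ _ (Nat.lt_succ_self b)
    have h2 : b + 1 ≤ ((π ⟨b + t + 1, hbt⟩ : Fin n) : ℕ) := by
      rw [hπ, Equiv.Perm.mul_apply]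
      have hv : wp n (List.range' b t) ⟨b + t + 1, hbt⟩ = ⟨b + t + 1, hbt⟩ := by
        apply Fin.ext
        rw [vRange t b hbt']
        simp only
        split_ifs <;> omega
      rw [hv]
      exact fix_ge (b' := b + 1) (fun x hx => hτ x hx) (show b + 1 ≤ b + t + 1 by omega)
    have hlt : b + t + 1 < n := by omega
    have hasc : π ⟨b + t, Nat.lt_of_succ_lt hlt⟩ < π ⟨b + t + 1, hlt⟩ := by
      rw [Fin.lt_def]
      have he : π ⟨b + t, Nat.lt_of_succ_lt hlt⟩ = π ⟨b + t, hbt'⟩ := rfl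
      have he2 : π ⟨b + t + 1, hlt⟩ = π ⟨b + t + 1, hbt⟩ := rfl
      rw [he, he2, h1]
      show b < _
      omega
    rw [(lenStep (k := b + t) hlt π).1 hasc, ih hbt']
    omega


lemma sT_fix' {k : ℕ} (h : k + 1 < n) (x : Fin n) (hne : (x : ℕ) ≠ k)
    (hne2 : (x : ℕ) ≠ k + 1) : sT n k x = x :=
  Fin.ext (by rw [sT_coe h, if_neg hne, if_neg hne2])

lemma sT_up {k : ℕ} (h : k + 1 < n) : sT n k ⟨k, Nat.lt_of_succ_lt h⟩ = ⟨k + 1, h⟩ :=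
  Fin.ext (by rw [sT_coe h]; simp)

lemma sT_down {k : ℕ} (h : k + 1 < n) : sT n k ⟨k + 1, h⟩ = ⟨k, Nat.lt_of_succ_lt h⟩ :=
  Fin.ext (by rw [sT_coe h]; simp)

def dF (b : ℕ) : List ℕ → ℕ
  | [] => b
  | (a :: l) => if a = b then dF (b + 1) l else b

lemma dF_lt {L : List ℕ} : ∀ {b : ℕ}, b < n → (∀ a ∈ L, a + 1 < n) → dF b L < n := by
  induction L with
  | nil => intro b hb _; exact hb
  | cons a l ih =>
    intro b hb hL
    rw [dF]
    split_ifs with hab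
    · exact ih (hab ▸ hL a (List.mem_cons_self)) fun x hx => hL x (List.mem_cons_of_mem a hx)
    · exact hb

lemma wp_dF (L : List ℕ) : ∀ (b : ℕ) (hb : b < n), L.Pairwise (· < ·) →
    (∀ a ∈ L, b ≤ a ∧ a + 1 < n) → ∀ x : Fin n, (x : ℕ) = dF b L →
    wp n L x = ⟨b, hb⟩ := by
  induction L with
  | nil =>
    intro b hb _ _ x hx
    rw [wp_nil]
    exact Fin.ext hx
  | cons a l ih =>
    intro b hb hpw hL x hx
    have hpl : l.Pairwise (· < ·) := hpw.tail
    have hal : ∀ y ∈ l, a < y := fun y hy => (List.pairwise_cons.mp hpw).1 y hy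
    have hLl : ∀ y ∈ l, a + 1 ≤ y ∧ y + 1 < n :=
      fun y hy => ⟨hal y hy, (hL y (List.mem_cons_of_mem a hy)).2⟩
    obtain ⟨hba, han⟩ := hL a (List.mem_cons_self)
    rw [wp_cons, Equiv.Perm.mul_apply]
    by_cases hab : a = b
    · subst hab
      rw [dF, if_pos rfl] at hx
      rw [ih (a + 1) han hpl hLl x hx, sT_down han]
    · have hblta : b < a := lt_of_le_of_ne hba (Ne.symm hab)
      rw [dF, if_neg hab] at hx
      have hxb : x = ⟨b, hb⟩ := Fin.ext hx
      subst hxb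
      rw [wp_fix hLl hb (by omega)]
      exact sT_fix' han _ (by simp; omega) (by simp; omega)

lemma dF_le {L : List ℕ} : ∀ {b m : ℕ}, b ≤ m → (∀ a ∈ L, b ≤ a ∧ a < m) →
    L.Pairwise (· < ·) →
    dF b L ≤ m ∧ (dF b L = m → L = List.range' b (m - b)) := by
  induction L with
  | nil =>
    intro b m hbm _ _
    refine ⟨hbm, fun h => ?_⟩
    subst h
    simp [dF]
  | cons a l ih =>
    intro b m hbm hL hpw
    obtain ⟨hba, ham⟩ := hL a (List.mem_cons_self)
    have hal : ∀ y ∈ l, a < y := fun y hy => (List.pairwise_cons.mp hpw).1 y hy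
    rw [dF]
    split_ifs with hab
    · subst hab
      have hstep := ih (b := a + 1) (m := m) (by omega)
        (fun y hy => ⟨hal y hy, (hL y (List.mem_cons_of_mem a hy)).2⟩) hpw.tail
      refine ⟨hstep.1, fun h => ?_⟩
      rw [hstep.2 h]
      have : m - a = (m - (a + 1)) + 1 := by omega
      rw [this, List.range'_succ]
    · refine ⟨hbm, fun h => ?_⟩
      omega


lemma claimC (b : ℕ) (hb : b < n) (τ : Equiv.Perm (Fin n))
    (hτ : ∀ x : Fin n, (x : ℕ) < b + 1 → τ x = x) :
    ∀ L : List ℕ, L.Pairwise (· < ·) → (∀ a ∈ L, b ≤ a ∧ a + 1 < n) →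
    invCount (τ * wp n L) = invCount τ + L.length →
    L = List.range' b L.length ∨
      ∃ i j k : Fin n, (τ * wp n L) i = ⟨b, hb⟩ ∧ i < j ∧ j < k ∧
        (τ * wp n L) k < (τ * wp n L) j ∧ (τ * wp n L) k ≠ ⟨b, hb⟩ := by
  intro L
  induction L using List.reverseRecOn with
  | nil => intro _ _ _; left; rfl
  | append_singleton L' m ih =>
    intro hpw hent hadd
    obtain ⟨hpw', -, ham'⟩ := List.pairwise_append.mp hpw
    have ham : ∀ a ∈ L', a < m := fun a ha => ham' a ha m (List.mem_singleton_self m)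
    have hent' : ∀ a ∈ L', b ≤ a ∧ a + 1 < n :=
      fun a ha => hent a (List.mem_append_left _ ha)
    obtain ⟨hbm, hmn⟩ := hent m (List.mem_append_right _ (List.mem_singleton_self m))
    have hmn' : m < n := Nat.lt_of_succ_lt hmn
    set σ' := τ * wp n L' with hσ'
    have hσeq : τ * wp n (L' ++ [m]) = σ' * sT n m := by
      rw [wp_concat, ← mul_assoc]
    rw [hσeq] at hadd ⊢
    set σ := σ' * sT n m with hσdef
    have hsub : invCount σ' ≤ invCount τ + L'.length := wp_le L' (fun a ha => (hent' a ha).2) τ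
    have hstep : invCount σ ≤ invCount σ' + 1 := lenStep_le hmn σ'
    rw [List.length_append, List.length_singleton] at hadd
    have hadd' : invCount σ' = invCount τ + L'.length := by omega
    have hstep' : invCount σ = invCount σ' + 1 := by omega
    -- ascent at m for σ'
    have hasc : σ' ⟨m, hmn'⟩ < σ' ⟨m + 1, hmn⟩ := by
      rcases lt_trichotomy (σ' ⟨m, hmn'⟩) (σ' ⟨m + 1, hmn⟩) with h1 | h1 | h1
      · exact h1
      · exact absurd (σ'.injective h1) (by simp [Fin.ext_iff])
      · have h2 := (lenStep hmn σ').2 h1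
        rw [← hσdef] at h2
        omega
    -- applications of σ
    have happ : ∀ x : Fin n, σ x = σ' (sT n m x) := fun x => rfl
    have happ' : ∀ x : Fin n, (x : ℕ) ≠ m → (x : ℕ) ≠ m + 1 → σ x = σ' x := by
      intro x h1 h2
      rw [happ, sT_fix' hmn x h1 h2]
    have happm : σ ⟨m, hmn'⟩ = σ' ⟨m + 1, hmn⟩ := by rw [happ, sT_up hmn]
    have happm1 : σ ⟨m + 1, hmn⟩ = σ' ⟨m, hmn'⟩ := by rw [happ, sT_down hmn]
    rcases ih hpw' hent' hadd' with hD1 | hD2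
    · -- L' is an interval
      obtain ⟨t, htL⟩ : ∃ t, L'.length = t := ⟨_, rfl⟩
      rw [htL] at hD1
      have hd'm : b + t ≤ m := by
        rcases Nat.eq_zero_or_pos t with h0 | h0
        · omega
        · have hlast : b + t - 1 ∈ L' := by
            rw [hD1]
            apply List.mem_range'.mpr
            exact ⟨t - 1, by omega, by omega⟩
          have := ham _ hlast
          omega
      have hd'n : b + t < n := by omega
      have hσ'd : σ' ⟨b + t, hd'n⟩ = ⟨b, hb⟩ := by
        rw [hσ', Equiv.Perm.mul_apply]
        have : wp n L' ⟨b + t, hd'n⟩ = ⟨b, hb⟩ := by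
          rw [hD1]
          apply Fin.ext
          rw [vRange t b hd'n]
          simp
        rw [this]
        exact hτ _ (Nat.lt_succ_self b)
      by_cases hmd : m = b + t
      · left
        have hrc := List.range'_concat (s := b) (n := t) (step := 1)
        simp only [one_mul] at hrc
        rw [List.length_append, List.length_singleton, htL, hD1, hmd]
        exact hrc.symm
      · right
        have hd'ltm : b + t < m := by omega
        refine ⟨⟨b + t, hd'n⟩, ⟨m, hmn'⟩, ⟨m + 1, hmn⟩, ?_, ?_, ?_, ?_, ?_⟩
        · rw [happ' _ (by simp; omega) (by simp; omega)]
          exact hσ'd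
        · rw [Fin.lt_def]; simpa using hd'ltm
        · rw [Fin.lt_def]; simp
        · rw [happm, happm1]; exact hasc
        · rw [happm1]
          intro hcon
          have := σ'.injective (hcon.trans hσ'd.symm)
          rw [Fin.ext_iff] at this
          simp at this
          omega
    · -- σ' has a pattern
      obtain ⟨i, j, k, hib, hij, hjk, hkj, hkb⟩ := hD2
      -- i = dF b L'
      have hwpb : wp n L' i = ⟨b, hb⟩ := by
        apply (τ.injective)
        rw [← Equiv.Perm.mul_apply, ← hσ', hib]
        exact (hτ _ (Nat.lt_succ_self b)).symm
      have hdFlt : dF b L' < n := dF_lt hb (fun a ha => (hent' a ha).2)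
      have hiv : (i : ℕ) = dF b L' := by
        have := wp_dF L' b hb hpw' hent' ⟨dF b L', hdFlt⟩ rfl
        have heq : wp n L' i = wp n L' ⟨dF b L', hdFlt⟩ := by rw [hwpb, this]
        have := (wp n L').injective heq
        rw [Fin.ext_iff] at this
        simpa using this
      have hdle := dF_le (L := L') (b := b) (m := m) hbm
        (fun a ha => ⟨(hent' a ha).1, ham a ha⟩) hpw'
      by_cases him : (i : ℕ) = m
      · -- L' = range' b (m - b), interval again, left disjunct
        left
        have hL' : L' = List.range' b (m - b) := hdle.2 (by omega)
        have hbm' : b + (m - b) = m := by omega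
        have hrc := List.range'_concat (s := b) (n := m - b) (step := 1)
        simp only [one_mul] at hrc
        rw [List.length_append, List.length_singleton, hL', List.length_range', hrc, hbm']
      · -- transfer the pattern
        right
        have hilt : (i : ℕ) < m := by
          have := hdle.1
          omega
        have hσi : σ i = ⟨b, hb⟩ := by
          rw [happ' i (by omega) (by omega)]
          exact hib
        have hjge : (i : ℕ) < (j : ℕ) := hij
        have hkgj : (j : ℕ) < (k : ℕ) := hjk
        by_cases hjm : (j : ℕ) = m
        · by_cases hkm1 : (k : ℕ) = m + 1
          · -- contradiction with ascent
            exfalso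
            have hj' : j = ⟨m, hmn'⟩ := Fin.ext hjm
            have hk' : k = ⟨m + 1, hmn⟩ := Fin.ext hkm1
            rw [hj', hk'] at hkj
            exact lt_asymm hkj hasc
          · -- k > m + 1 : use (i, m+1, k)
            have hkgt : m + 1 < (k : ℕ) := by omega
            refine ⟨i, ⟨m + 1, hmn⟩, k, hσi, ?_, ?_, ?_, ?_⟩
            · rw [Fin.lt_def]; simp; omega
            · rw [Fin.lt_def]; simp; omega
            · rw [happm1, happ' k (by omega) (by omega)]
              have hj' : j = ⟨m, hmn'⟩ := Fin.ext hjm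
              rw [← hj']
              exact hkj
            · rw [happ' k (by omega) (by omega)]
              exact hkb
        · by_cases hjm1 : (j : ℕ) = m + 1
          · -- k > m + 1 : use (i, m, k)
            have hkgt : m + 1 < (k : ℕ) := by omega
            refine ⟨i, ⟨m, hmn'⟩, k, hσi, ?_, ?_, ?_, ?_⟩
            · rw [Fin.lt_def]; simp; omega
            · rw [Fin.lt_def]; simp; omega
            · rw [happm, happ' k (by omega) (by omega)]
              have hj' : j = ⟨m + 1, hmn⟩ := Fin.ext hjm1
              rw [← hj']
              exact hkj
            · rw [happ' k (by omega) (by omega)]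
              exact hkb
          · -- j ∉ {m, m+1}
            by_cases hkm : (k : ℕ) = m
            · -- use (i, j, m+1)
              refine ⟨i, j, ⟨m + 1, hmn⟩, hσi, hij, ?_, ?_, ?_⟩
              · rw [Fin.lt_def]; simp; omega
              · rw [happm1, happ' j hjm hjm1]
                have hk' : k = ⟨m, hmn'⟩ := Fin.ext hkm
                rw [← hk']
                exact hkj
              · rw [happm1]
                have hk' : k = ⟨m, hmn'⟩ := Fin.ext hkm
                rw [← hk']
                exact hkb
            · by_cases hkm1 : (k : ℕ) = m + 1
              · -- use (i, j, m) ; j < m since j < k = m+1, j ≠ m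
                refine ⟨i, j, ⟨m, hmn'⟩, hσi, hij, ?_, ?_, ?_⟩
                · rw [Fin.lt_def]; simp; omega
                · rw [happm, happ' j hjm hjm1]
                  have hk' : k = ⟨m + 1, hmn⟩ := Fin.ext hkm1
                  rw [← hk']
                  exact hkj
                · rw [happm]
                  have hk' : k = ⟨m + 1, hmn⟩ := Fin.ext hkm1
                  rw [← hk']
                  exact hkb
              · refine ⟨i, j, k, hσi, hij, hjk, ?_, ?_⟩
                · rw [happ' j hjm hjm1, happ' k hkm hkm1]
                  exact hkj
                · rw [happ' k hkm hkm1]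
                  exact hkb


lemma vinv_ge (b t : ℕ) (hbt : b + t < n) (x : Fin n) (hx : b + 1 ≤ (x : ℕ)) :
    b ≤ (((wp n (List.range' b t))⁻¹ x : Fin n) : ℕ) := by
  have hP := vRange t b hbt ((wp n (List.range' b t))⁻¹ x)
  rw [show ∀ (e : Equiv.Perm (Fin n)) y, e (e⁻¹ y) = y from fun e y => e.apply_symm_apply y] at hP
  split_ifs at hP <;> omega

lemma vinv_mono (b t : ℕ) (hbt : b + t < n) (x y : Fin n) (hx : b + 1 ≤ (x : ℕ))
    (hxy : x < y) : (wp n (List.range' b t))⁻¹ x < (wp n (List.range' b t))⁻¹ y := by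
  have hP := vRange t b hbt ((wp n (List.range' b t))⁻¹ x)
  have hQ := vRange t b hbt ((wp n (List.range' b t))⁻¹ y)
  rw [show ∀ (e : Equiv.Perm (Fin n)) y, e (e⁻¹ y) = y from fun e y => e.apply_symm_apply y] at hP hQ
  rw [Fin.lt_def] at hxy ⊢
  split_ifs at hP hQ <;> omega

lemma tau_avoid (b t : ℕ) (hbt : b + t < n) (σ : Equiv.Perm (Fin n))
    (hav : ¬ ∃ i j k : Fin n, b ≤ (i : ℕ) ∧ i < j ∧ j < k ∧ σ i < σ k ∧ σ k < σ j) :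
    ¬ ∃ i j k : Fin n, b + 1 ≤ (i : ℕ) ∧ i < j ∧ j < k ∧
      (σ * (wp n (List.range' b t))⁻¹) i < (σ * (wp n (List.range' b t))⁻¹) k ∧
      (σ * (wp n (List.range' b t))⁻¹) k < (σ * (wp n (List.range' b t))⁻¹) j := by
  rintro ⟨i, j, k, hi, hij, hjk, h1, h2⟩
  apply hav
  set u := (wp n (List.range' b t))⁻¹ with hu
  have hij' : u i < u j := vinv_mono b t hbt i j hi hij
  have hjk' : u j < u k := vinv_mono b t hbt j k (by
    rw [Fin.lt_def] at hij; omega) hjk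
  exact ⟨u i, u j, u k, vinv_ge b t hbt i hi, hij', hjk', h1, h2⟩

-- word machinery
lemma sort_union (A B : Finset (ℕ ×ₗ ℕ)) (h : ∀ a ∈ A, ∀ c ∈ B, a < c) :
    (A ∪ B).sort (· ≤ ·) = A.sort (· ≤ ·) ++ B.sort (· ≤ ·) := by
  have hd : Disjoint A B := by
    rw [Finset.disjoint_left]
    intro a haA haB
    exact absurd (h a haA a haB) (lt_irrefl a)
  refine List.Perm.eq_of_pairwise' (r := (· ≤ ·)) (Finset.pairwise_sort _ _) ?_ ?_
  · rw [List.pairwise_append]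
    refine ⟨Finset.pairwise_sort _ _, Finset.pairwise_sort _ _, ?_⟩
    intro a ha c hc
    exact le_of_lt (h a ((Finset.mem_sort _).mp ha) c ((Finset.mem_sort _).mp hc))
  · apply Multiset.coe_eq_coe.mp
    rw [Finset.sort_eq, ← Finset.disjUnion_eq_union A B hd, ← Multiset.coe_add,
      Finset.sort_eq, Finset.sort_eq]
    rfl

lemma koganWord_split (A B : Finset (ℕ × ℕ))
    (h : ∀ a ∈ A, ∀ c ∈ B, a.1 < c.1) :
    koganWord n (A ∪ B) = koganWord n A ++ koganWord n B := by
  rw [koganWord, Finset.image_union, sort_union, List.map_append, koganWord, koganWord]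
  intro x hx y hy
  obtain ⟨a, ha, rfl⟩ := Finset.mem_image.mp hx
  obtain ⟨c, hc, rfl⟩ := Finset.mem_image.mp hy
  rw [Prod.Lex.lt_iff]
  left
  exact h a ha c hc

lemma mem_koganWord_iff (B : Finset (ℕ × ℕ)) (a : ℕ) :
    a ∈ koganWord n B ↔ ∃ p ∈ B, n - p.1 + p.2 - 2 = a := by
  rw [koganWord, List.mem_map]
  constructor
  · rintro ⟨q, hq, rfl⟩
    rw [Finset.mem_sort, Finset.mem_image] at hq
    obtain ⟨p, hp, rfl⟩ := hq
    exact ⟨p, hp, rfl⟩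
  · rintro ⟨p, hp, rfl⟩
    exact ⟨toLex p, (Finset.mem_sort _).mpr (Finset.mem_image_of_mem _ hp), rfl⟩

lemma koganWord_row_pairwise (R : ℕ) (B : Finset (ℕ × ℕ)) (hRn : R < n)
    (hB : ∀ p ∈ B, p.1 = R ∧ 1 ≤ p.2) : (koganWord n B).Pairwise (· < ·) := by
  rw [koganWord, List.pairwise_map]
  have hs := (Finset.sortedLT_sort (B.image (toLex : ℕ × ℕ → ℕ ×ₗ ℕ))).pairwise
  refine hs.imp_of_mem ?_
  intro q q' hq hq' hlt
  rw [Finset.mem_sort, Finset.mem_image] at hq hq'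
  obtain ⟨p, hp, rfl⟩ := hq
  obtain ⟨p', hp', rfl⟩ := hq'
  obtain ⟨hp1, hp2⟩ := hB p hp
  obtain ⟨hp1', hp2'⟩ := hB p' hp'
  rw [Prod.Lex.lt_iff] at hlt
  simp only [ofLex_toLex] at hlt ⊢
  rcases hlt with h | ⟨-, h⟩
  · omega
  · omega

lemma koganWord_letters (E : Finset (ℕ × ℕ)) (hK : ∀ p ∈ E, 1 ≤ p.2 ∧ p.2 ≤ p.1 ∧ p.1 + 1 ≤ n)
    (r : ℕ) (hrow : ∀ p ∈ E, p.1 ≤ r) (hr : r < n) :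
    ∀ a ∈ koganWord n E, n - 1 - r ≤ a ∧ a + 1 < n := by
  intro a ha
  obtain ⟨p, hp, rfl⟩ := (mem_koganWord_iff E a).mp ha
  obtain ⟨h1, h2, h3⟩ := hK p hp
  have h4 := hrow p hp
  omega

def ERow (R t : ℕ) : Finset (ℕ × ℕ) := (Finset.range t).image (fun x => (R, x + 1))

lemma mem_ERow {R t : ℕ} {p : ℕ × ℕ} : p ∈ ERow R t ↔ p.1 = R ∧ 1 ≤ p.2 ∧ p.2 ≤ t := by
  rw [ERow, Finset.mem_image]
  constructor
  · rintro ⟨x, hx, rfl⟩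
    rw [Finset.mem_range] at hx
    exact ⟨rfl, by omega, by omega⟩
  · rintro ⟨h1, h2, h3⟩
    exact ⟨p.2 - 1, Finset.mem_range.mpr (by omega), by
      rw [← h1]; ext <;> simp <;> omega⟩

lemma koganWord_ERow (R t : ℕ) (hR : 1 ≤ R) (hRn : R < n) :
    koganWord n (ERow R t) = List.range' (n - 1 - R) t := by
  rw [koganWord, ERow, Finset.image_image]
  have hinj : Set.InjOn ((toLex : ℕ × ℕ → ℕ ×ₗ ℕ) ∘ fun x => (R, x + 1)) (Finset.range t) := by
    intro x _ y _ hxy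
    simpa [Prod.ext_iff] using hxy
  have hsort : ((Finset.range t).image ((toLex : ℕ × ℕ → ℕ ×ₗ ℕ) ∘ fun x => (R, x + 1))).sort (· ≤ ·)
      = (List.range t).map ((toLex : ℕ × ℕ → ℕ ×ₗ ℕ) ∘ fun x => (R, x + 1)) := by
    refine List.Perm.eq_of_pairwise' (r := (· ≤ ·)) (Finset.pairwise_sort _ _) ?_ ?_
    · rw [List.pairwise_map]
      refine List.Pairwise.imp ?_ List.pairwise_lt_range
      intro x y hxy
      rw [Function.comp_apply, Function.comp_apply, Prod.Lex.le_iff]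
      right
      exact ⟨rfl, by simp only [ofLex_toLex]; omega⟩
    · apply Multiset.coe_eq_coe.mp
      rw [Finset.sort_eq, Finset.image_val_of_injOn hinj, Finset.range_val]
      rfl
  rw [hsort, List.map_map, List.range'_eq_map_range]
  apply List.map_congr_left
  intro x hx
  simp only [Function.comp_apply, ofLex_toLex]
  omega

lemma row_recovery (R t : ℕ) (hRn : R < n) (hR : 1 ≤ R) (B : Finset (ℕ × ℕ))
    (hB : ∀ p ∈ B, p.1 = R ∧ 1 ≤ p.2)
    (hw : koganWord n B = List.range' (n - 1 - R) t) : B = ERow R t := by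
  ext p
  rw [mem_ERow]
  constructor
  · intro hp
    obtain ⟨h1, h2⟩ := hB p hp
    have hmem : n - p.1 + p.2 - 2 ∈ koganWord n B := (mem_koganWord_iff B _).mpr ⟨p, hp, rfl⟩
    rw [hw, List.mem_range'] at hmem
    obtain ⟨i, hi, he⟩ := hmem
    refine ⟨h1, h2, ?_⟩
    omega
  · rintro ⟨h1, h2, h3⟩
    have hmem : n - 1 - R + (p.2 - 1) ∈ List.range' (n - 1 - R) t := by
      rw [List.mem_range']
      exact ⟨p.2 - 1, by omega, by omega⟩
    rw [← hw] at hmem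
    obtain ⟨q, hq, he⟩ := (mem_koganWord_iff B _).mp hmem
    obtain ⟨hq1, hq2⟩ := hB q hq
    have : q = p := by
      have : q.2 = p.2 := by omega
      ext
      · rw [hq1, h1]
      · exact this
    rwa [← this]


lemma mem_range1 {m s t : ℕ} : m ∈ List.range' s t ↔ s ≤ m ∧ m < s + t := by
  rw [List.mem_range']
  constructor
  · rintro ⟨i, h1, rfl⟩; omega
  · rintro ⟨h1, h2⟩; exact ⟨m - s, by omega, by omega⟩

lemma keyP (n : ℕ) : ∀ (r : ℕ), r < n → ∀ σ : Equiv.Perm (Fin n),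
    (∀ x : Fin n, (x : ℕ) < n - 1 - r → σ x = x) →
    (¬ ∃ i j k : Fin n, n - 1 - r ≤ (i : ℕ) ∧ i < j ∧ j < k ∧ σ i < σ k ∧ σ k < σ j) →
    ∃! E : Finset (ℕ × ℕ),
      (IsKoganPositions n E ∧ ∀ p ∈ E, p.1 ≤ r) ∧ IsReducedWordFor n σ (koganWord n E) := by
  intro r
  induction r with
  | zero =>
    intro hr σ hfix _
    have hall : ∀ x : Fin n, σ x = x := by
      intro x
      by_cases hx : (x : ℕ) < n - 1
      · exact hfix x hx
      · have hx' : (x : ℕ) = n - 1 := by have := x.isLt; omega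
        by_contra hne
        have hy : ((σ x : Fin n) : ℕ) < n - 1 := by
          have h1 := (σ x).isLt
          rcases Nat.lt_or_ge ((σ x : Fin n) : ℕ) (n - 1) with h | h
          · exact h
          · exfalso
            apply hne
            apply Fin.ext
            omega
        exact hne (σ.injective (hfix (σ x) hy))
    have hσ1 : σ = 1 := Equiv.ext fun x => (hall x).trans rfl
    have hwe : koganWord n (∅ : Finset (ℕ × ℕ)) = [] := by
      rw [koganWord, Finset.image_empty, Finset.sort_empty, List.map_nil]
    refine ⟨∅, ⟨⟨?_, ?_⟩, ?_, ?_, ?_⟩, ?_⟩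
    · intro p hp; exact absurd hp (Finset.notMem_empty p)
    · intro p hp; exact absurd hp (Finset.notMem_empty p)
    · intro a ha; rw [hwe] at ha; exact absurd ha (by simp)
    · rw [hwe, List.map_nil, List.prod_nil, hσ1]
    · rw [hwe, hσ1, invCount_one', List.length_nil]
    · intro E hE
      obtain ⟨⟨hK, hrow⟩, -⟩ := hE
      rw [Finset.eq_empty_iff_forall_notMem]
      intro p hp
      have h1 := hK p hp
      have h2 := hrow p hp
      omega
  | succ r ih =>
    intro hr σ hfix havoid
    have hb : n - 1 - (r + 1) < n := by omega
    set b := n - 1 - (r + 1) with hbdef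
    have hb1 : n - 1 - r = b + 1 := by omega
    have hdn : ((σ.symm ⟨b, hb⟩ : Fin n) : ℕ) < n := (σ.symm ⟨b, hb⟩).isLt
    set d := ((σ.symm ⟨b, hb⟩ : Fin n) : ℕ) with hddef
    have hσd : σ ⟨d, hdn⟩ = ⟨b, hb⟩ := by
      have he : (⟨d, hdn⟩ : Fin n) = σ.symm ⟨b, hb⟩ := Fin.ext rfl
      rw [he, Equiv.apply_symm_apply]
    have hbd : b ≤ d := by
      by_contra hcon
      push_neg at hcon
      have h1 := hfix ⟨d, hdn⟩ hcon
      rw [hσd] at h1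
      rw [Fin.ext_iff] at h1
      simp only [Fin.val_mk] at h1
      omega
    set t := d - b with htdef
    have hbt : b + t < n := by omega
    set v := wp n (List.range' b t) with hvdef
    set τ := σ * v⁻¹ with hτdef
    have hτv : τ * v = σ := inv_mul_cancel_right σ v
    have hvd : v ⟨d, hdn⟩ = ⟨b, hb⟩ := by
      apply Fin.ext
      rw [hvdef, vRange t b hbt]
      show (if b ≤ d ∧ d < b + t then d + 1 else if d = b + t then b else d) = b
      split_ifs <;> omega
    have hτfix : ∀ x : Fin n, (x : ℕ) < b + 1 → τ x = x := by
      intro x hx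
      rcases Nat.lt_or_ge (x : ℕ) b with hxb | hxb
      · have hvx : v x = x := by
          apply Fin.ext
          rw [hvdef, vRange t b hbt]
          split_ifs <;> omega
        have hvinv : v⁻¹ x = x := by
          conv_lhs => rw [← hvx]
          exact v.symm_apply_apply x
        rw [hτdef, Equiv.Perm.mul_apply, hvinv]
        exact hfix x hxb
      · have hxb' : (x : ℕ) = b := by omega
        have hxeq : x = ⟨b, hb⟩ := Fin.ext hxb'
        subst hxeq
        have hvinv : v⁻¹ ⟨b, hb⟩ = ⟨d, hdn⟩ := by
          rw [← hvd]
          exact v.symm_apply_apply _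
        rw [hτdef, Equiv.Perm.mul_apply, hvinv, hσd]
    have hτavoid : ¬ ∃ i j k : Fin n, b + 1 ≤ (i : ℕ) ∧ i < j ∧ j < k ∧
        τ i < τ k ∧ τ k < τ j := by
      rw [hτdef, hvdef]
      exact tau_avoid b t hbt σ havoid
    obtain ⟨E0, ⟨⟨hK0, hrow0⟩, hred0⟩, huniq0⟩ :=
      ih (by omega) τ (by rw [hb1]; exact hτfix) (by rw [hb1]; exact hτavoid)
    have htr : t ≤ r + 1 := by omega
    have hEhiK : ∀ p ∈ ERow (r + 1) t, 1 ≤ p.2 ∧ p.2 ≤ p.1 ∧ p.1 + 1 ≤ n := by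
      intro p hp; rw [mem_ERow] at hp; omega
    have hlex : ∀ a ∈ E0, ∀ c ∈ ERow (r + 1) t, a.1 < c.1 := by
      intro a ha c hc
      have h1 := hrow0 a ha
      rw [mem_ERow] at hc
      omega
    have hERw : koganWord n (ERow (r + 1) t) = List.range' b t := by
      have h1 := koganWord_ERow (n := n) (r + 1) t (by omega) (by omega)
      rw [← hbdef] at h1
      exact h1
    have hsplitw : koganWord n (E0 ∪ ERow (r + 1) t) = koganWord n E0 ++ List.range' b t := by
      rw [koganWord_split E0 _ hlex, hERw]
    obtain ⟨hval0, hprod0, hlen0⟩ := hred0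
    have hprod0' : wp n (koganWord n E0) = τ := hprod0
    have hlenadd : invCount σ = invCount τ + t := by
      conv_lhs => rw [← hτv]
      rw [hvdef]
      exact addChain τ b hτfix t hbt
    refine ⟨E0 ∪ ERow (r + 1) t, ⟨⟨?_, ?_⟩, ?_, ?_, ?_⟩, ?_⟩
    · intro p hp
      rcases Finset.mem_union.mp hp with h | h
      · exact hK0 p h
      · exact hEhiK p h
    · intro p hp
      rcases Finset.mem_union.mp hp with h | h
      · exact le_trans (hrow0 p h) (by omega)
      · rw [mem_ERow] at h; omega
    · rw [hsplitw]
      intro a ha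
      rcases List.mem_append.mp ha with h | h
      · exact hval0 a h
      · rw [mem_range1] at h; omega
    · show wp n (koganWord n (E0 ∪ ERow (r + 1) t)) = σ
      rw [hsplitw, wp_append, hprod0', ← hvdef]
      exact hτv
    · rw [hsplitw, List.length_append, List.length_range', hlen0, hlenadd]
    · -- uniqueness
      intro E hE
      obtain ⟨⟨hKE, hrowE⟩, hvalE, hprodE, hlenE⟩ := hE
      classical
      set B := E.filter (fun p => p.1 = r + 1) with hBdef
      set A := E.filter (fun p => ¬ p.1 = r + 1) with hAdef
      have hEAB : E = A ∪ B := by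
        rw [hAdef, hBdef, Finset.union_comm]
        exact (Finset.filter_union_filter_not_eq _ E).symm
      have hArow : ∀ p ∈ A, p.1 ≤ r := by
        intro p hp
        rw [hAdef, Finset.mem_filter] at hp
        have := hrowE p hp.1
        have := hp.2
        omega
      have hAK : ∀ p ∈ A, 1 ≤ p.2 ∧ p.2 ≤ p.1 ∧ p.1 + 1 ≤ n :=
        fun p hp => hKE p (Finset.filter_subset _ _ hp)
      have hBK : ∀ p ∈ B, 1 ≤ p.2 ∧ p.2 ≤ p.1 ∧ p.1 + 1 ≤ n :=
        fun p hp => hKE p (Finset.filter_subset _ _ hp)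
      have hBrow : ∀ p ∈ B, p.1 = r + 1 ∧ 1 ≤ p.2 := by
        intro p hp
        rw [hBdef, Finset.mem_filter] at hp
        exact ⟨hp.2, (hKE p hp.1).1⟩
      have hBrow' : ∀ p ∈ B, p.1 ≤ r + 1 := fun p hp => le_of_eq (hBrow p hp).1
      have hlexAB : ∀ a ∈ A, ∀ c ∈ B, a.1 < c.1 := by
        intro a ha c hc
        have h1 := hArow a ha
        have h2 := (hBrow c hc).1
        omega
      have hsplitE : koganWord n E = koganWord n A ++ koganWord n B := by
        conv_lhs => rw [hEAB]
        exact koganWord_split A B hlexAB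
      have hAlet : ∀ a ∈ koganWord n A, b + 1 ≤ a ∧ a + 1 < n := by
        have h1 := koganWord_letters A hAK r hArow (by omega)
        rw [hb1] at h1
        exact h1
      have hBlet : ∀ a ∈ koganWord n B, b ≤ a ∧ a + 1 < n :=
        koganWord_letters B hBK (r + 1) hBrow' hr
      have hBpw : (koganWord n B).Pairwise (· < ·) :=
        koganWord_row_pairwise (r + 1) B hr hBrow
      have hτE : wp n (koganWord n A) * wp n (koganWord n B) = σ := by
        rw [← wp_append, ← hsplitE]
        exact hprodE
      have hsubA : invCount (wp n (koganWord n A)) ≤ (koganWord n A).length :=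
        wp_le' _ (fun a ha => (hAlet a ha).2)
      have hsubB : invCount (wp n (koganWord n A) * wp n (koganWord n B)) ≤
          invCount (wp n (koganWord n A)) + (koganWord n B).length :=
        wp_le _ (fun a ha => (hBlet a ha).2) _
      have hlenE' : (koganWord n A).length + (koganWord n B).length = invCount σ := by
        rw [← List.length_append, ← hsplitE]
        exact hlenE
      have hσinv : invCount (wp n (koganWord n A) * wp n (koganWord n B)) = invCount σ := by
        rw [hτE]
      have hAinv : invCount (wp n (koganWord n A)) = (koganWord n A).length := by omega
      have haddE : invCount (wp n (koganWord n A) * wp n (koganWord n B)) =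
          invCount (wp n (koganWord n A)) + (koganWord n B).length := by omega
      have hwAfix : ∀ x : Fin n, (x : ℕ) < b + 1 → wp n (koganWord n A) x = x := by
        intro x hx
        have h1 := wp_fix (u := koganWord n A) (c := b + 1) hAlet x.isLt hx
        simpa using h1
      rcases claimC b hb (wp n (koganWord n A)) hwAfix (koganWord n B) hBpw hBlet haddE
        with hD1 | hD2
      · -- interval case
        obtain ⟨lB, hlB⟩ : ∃ l, (koganWord n B).length = l := ⟨_, rfl⟩
        rw [hlB] at hD1
        have hlenB_n : b + lB < n := by
          rcases Nat.eq_zero_or_pos lB with h0 | h0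
          · omega
          · have hlast : b + lB - 1 ∈ koganWord n B := by
              rw [hD1, mem_range1]
              omega
            have := (hBlet _ hlast).2
            omega
        have hwb : wp n (koganWord n B) ⟨b + lB, hlenB_n⟩ = ⟨b, hb⟩ := by
          rw [hD1]
          apply Fin.ext
          rw [vRange lB b hlenB_n]
          show (if b ≤ b + lB ∧ b + lB < b + lB then b + lB + 1
            else if b + lB = b + lB then b else b + lB) = b
          split_ifs <;> omega
        have hσbl : σ ⟨b + lB, hlenB_n⟩ = ⟨b, hb⟩ := by
          rw [← hτE, Equiv.Perm.mul_apply, hwb]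
          exact hwAfix _ (Nat.lt_succ_self b)
        have hdlB : d = b + lB := by
          have h1 := σ.injective (hσbl.trans hσd.symm)
          rw [Fin.ext_iff] at h1
          simpa using h1.symm
        have hlBt : lB = t := by omega
        have hBERow : B = ERow (r + 1) t := by
          apply row_recovery (r + 1) t hr (by omega) B hBrow
          rw [← hbdef, hD1, hlBt]
        have hwAprod : wp n (koganWord n A) = τ := by
          have hv' : wp n (koganWord n B) = v := by
            rw [hD1, hlBt, hvdef]
          rw [hv'] at hτE
          rw [hτdef]
          exact eq_mul_inv_of_mul_eq hτE
        have hAred : IsReducedWordFor n τ (koganWord n A) := by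
          refine ⟨fun a ha => (hAlet a ha).2, hwAprod, ?_⟩
          rw [hwAprod] at hAinv
          exact hAinv.symm
        have hAeq : A = E0 := huniq0 A ⟨⟨hAK, hArow⟩, hAred⟩
        rw [hEAB, hAeq, hBERow]
      · -- pattern case: contradiction
        exfalso
        obtain ⟨i, j, k, hib, hij, hjk, hkj, hkb⟩ := hD2
        rw [hτE] at hib hkj hkb
        apply havoid
        have hbi : b ≤ (i : ℕ) := by
          by_contra hc
          push_neg at hc
          have h1 := hfix i hc
          rw [h1] at hib
          have h2 : (i : ℕ) = b := by simpa using congrArg Fin.val hib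
          omega
        have hbk : b ≤ (k : ℕ) := by
          rw [Fin.lt_def] at hij hjk
          omega
        have hσk_ge : b ≤ ((σ k : Fin n) : ℕ) :=
          fix_ge (fun x hx => hfix x hx) hbk
        have hik : σ i < σ k := by
          rw [hib, Fin.lt_def]
          have hne : ((σ k : Fin n) : ℕ) ≠ b := by
            intro hc
            exact hkb (Fin.ext hc)
          show b < _
          omega
        exact ⟨i, j, k, hbi, hij, hjk, hik, hkj⟩

end KoganAux


/-- If `σ ∈ S_n` avoids the pattern `132`, then there is a unique reduced Kogan face of
type `σ`: exactly one set `E` of positions whose word is a reduced word for `σ`. -/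
theorem unique_reduced_kogan_face_of_avoids_132 (n : ℕ) (hn : 1 ≤ n)
    (σ : Equiv.Perm (Fin n))
    (hσ : ¬ ∃ i j k : Fin n, i < j ∧ j < k ∧ σ i < σ k ∧ σ k < σ j) :
    ∃! E : Finset (ℕ × ℕ), IsKoganPositions n E ∧
      IsReducedWordFor n σ (koganWord n E) := by
  obtain ⟨E, ⟨⟨hK, hrow⟩, hred⟩, huniq⟩ :=
    KoganAux.keyP n (n - 1) (by omega) σ (fun x hx => absurd hx (by omega))
      (by rintro ⟨i, j, k, -, hij, hjk, h1, h2⟩; exact hσ ⟨i, j, k, hij, hjk, h1, h2⟩)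
  refine ⟨E, ⟨hK, hred⟩, ?_⟩
  intro E' hE'
  obtain ⟨hK', hred'⟩ := hE'
  exact huniq E' ⟨⟨hK', fun p hp => by have := (hK' p hp).2.2; omega⟩, hred'⟩
end

section
/- There exists a polynomial p ∈ ℚ[x] such that p(k) = Σ_{j=1}^{k+1} j^{20} for every integer k ≥ 0, and this polynomial p has at least one negative coefficient. Consequently, the face F_{20} of the Gelfand–Tsetlin polytope GT((1^{20}, 0^{21})), whose Ehrhart polynomial is i(F_{20}, k) = Σ_{j=1}^{k+1} j^{20}, has an Ehrhart polynomial with a negative coefficient. -/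
noncomputable def ehrP : Polynomial ℚ :=
  Polynomial.C (1/1 : ℚ) * Polynomial.X ^ 0 + Polynomial.C (-168011/330 : ℚ) * Polynomial.X ^ 1 + Polynomial.C (190/1 : ℚ) * Polynomial.X ^ 2 + Polynomial.C (291155/63 : ℚ) * Polynomial.X ^ 3 + Polynomial.C (4845/1 : ℚ) * Polynomial.X ^ 4 + Polynomial.C (86317/10 : ℚ) * Polynomial.X ^ 5 + Polynomial.C (38760/1 : ℚ) * Polynomial.X ^ 6 + Polynomial.C (83980/1 : ℚ) * Polynomial.X ^ 7 + Polynomial.C (125970/1 : ℚ) * Polynomial.X ^ 8 + Polynomial.C (10358287/63 : ℚ) * Polynomial.X ^ 9 + Polynomial.C (184756/1 : ℚ) * Polynomial.X ^ 10 + Polynomial.C (5584670/33 : ℚ) * Polynomial.X ^ 11 + Polynomial.C (125970/1 : ℚ) * Polynomial.X ^ 12 + Polynomial.C (77197/1 : ℚ) * Polynomial.X ^ 13 + Polynomial.C (38760/1 : ℚ) * Polynomial.X ^ 14 + Polynomial.C (326876/21 : ℚ) * Polynomial.X ^ 15 + Polynomial.C (4845/1 : ℚ) * Polynomial.X ^ 16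 + Polynomial.C (2261/2 : ℚ) * Polynomial.X ^ 17 + Polynomial.C (190/1 : ℚ) * Polynomial.X ^ 18 + Polynomial.C (65/3 : ℚ) * Polynomial.X ^ 19 + Polynomial.C (3/2 : ℚ) * Polynomial.X ^ 20 + Polynomial.C (1/21 : ℚ) * Polynomial.X ^ 21

lemma ehrP_step (x : ℚ) : ehrP.eval (x + 1) = ehrP.eval x + (x + 2) ^ 20 := by
  simp only [ehrP, Polynomial.eval_add, Polynomial.eval_mul, Polynomial.eval_pow,
    Polynomial.eval_C, Polynomial.eval_X]
  ring

/-- The unique polynomial `p ∈ ℚ[x]` with `p(k) = 1^20 + 2^20 + ⋯ + (k+1)^20` for all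
integers `k ≥ 0` — the Ehrhart polynomial of the face `F₂₀` of the Gelfand–Tsetlin
polytope `GT((1^20, 0^21))` — has a negative coefficient. -/
theorem ehrhart_of_gt_face_has_negative_coefficient :
    ∃ p : Polynomial ℚ,
      (∀ k : ℕ, p.eval (k : ℚ) = ∑ j ∈ Finset.Icc 1 (k + 1), (j : ℚ) ^ 20) ∧
      ∃ i : ℕ, p.coeff i < 0 := by
  refine ⟨ehrP, ?_, 1, ?_⟩
  · intro k
    induction k with
    | zero =>
      norm_num [ehrP]
    | succ n ih =>
      have h : ((n : ℚ) + 1 + 1) = ((n : ℚ) + 2) := by ring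
      rw [Finset.sum_Icc_succ_top (by omega : 1 ≤ n + 1 + 1)]
      push_cast
      rw [ehrP_step, ih]
      ring
  · simp only [ehrP, Polynomial.coeff_add, Polynomial.coeff_C_mul, Polynomial.coeff_X_pow]
    norm_num
end
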